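/- arXiv:1808.04424 — 8 statements merged into one kernel-verified Lean document; each statement's English description precedes it below -/
import Mathlib

section
/- Let V be a finite-dimensional complex vector space with direct sum decomposition V = V₁ ⊕ V₂. Let X, Y be endomorphisms of V with Y ≠ 0, such that Y(V₁) ⊆ V₁, Y(V₂) = 0, and XY = YX. Define X₁ : V₁ → V₁ as the composition of X restricted to V₁ with the projection onto V₁ along V₂. Then for every λ ∈ ℂ, Y maps the generalized eigenspace of X for eigenvalue λ into the generalized eigenspace of X₁ for eigenvalue λ. -/
/-- Let `V = V₁ ⊕ V₂` be a finite-dimensional complex vector space, `X Y : V →ₗ V` with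
`Y ≠ 0`, `Y(V₁) ⊆ V₁`, `Y(V₂) = 0` and `[X, Y] = 0`.  Let `X₁ : V₁ → V₁` be the compression
of `X` to `V₁` (projection along `V₂` composed with `X|_{V₁}`).  Then for every `λ ∈ ℂ`,
`Y` maps the generalized `λ`-eigenspace of `X` into the generalized `λ`-eigenspace of `X₁`. -/
theorem stmt0 (V : Type*) [AddCommGroup V] [Module ℂ V] [FiniteDimensional ℂ V]
    (V₁ V₂ : Submodule ℂ V) (hcompl : IsCompl V₁ V₂)
    (X Y : V →ₗ[ℂ] V) (hY : Y ≠ 0)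
    (hY1 : ∀ v ∈ V₁, Y v ∈ V₁) (hY2 : ∀ v ∈ V₂, Y v = 0)
    (hcomm : X ∘ₗ Y = Y ∘ₗ X)
    (X₁ : V₁ →ₗ[ℂ] V₁)
    (hX₁ : ∀ v : V₁, X₁ v = V₁.linearProjOfIsCompl V₂ hcompl (X v))
    (lam : ℂ) (v : V) (hv : ∃ j : ℕ, ((X - lam • (LinearMap.id : V →ₗ[ℂ] V)) ^ j) v = 0) :
    Y v ∈ V₁ ∧
      ∀ w : V₁, (w : V) = Y v → ∃ j : ℕ, ((X₁ - lam • (LinearMap.id : V₁ →ₗ[ℂ] V₁)) ^ j) w = 0 := by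
  -- Y maps everything into V₁
  have hYV1 : ∀ u : V, Y u ∈ V₁ := by
    intro u
    obtain ⟨p, q, hp, hq, rfl⟩ := Submodule.codisjoint_iff_exists_add_eq.mp hcompl.codisjoint u
    rw [map_add, hY2 q hq, add_zero]
    exact hY1 p hp
  have hcomm' : ∀ u : V, X (Y u) = Y (X u) := fun u => LinearMap.congr_fun hcomm u
  set T : V →ₗ[ℂ] V := X - lam • LinearMap.id with hT
  set T₁ : V₁ →ₗ[ℂ] V₁ := X₁ - lam • LinearMap.id with hT₁
  -- key commutation: T₁ on an element of the form Y z
  have key : ∀ (z : V) (w : V₁), (w : V) = Y z → ((T₁ w : V₁) : V) = Y (T z) := by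
    intro z w hw
    have hXw : X (w : V) = Y (X z) := by rw [hw, hcomm']
    have hmem : X (w : V) ∈ V₁ := by rw [hXw]; exact hYV1 _
    have : X₁ w = ⟨X (w : V), hmem⟩ := by
      rw [hX₁ w]
      exact Submodule.linearProjOfIsCompl_apply_left hcompl ⟨X (w : V), hmem⟩
    simp only [hT₁, hT, LinearMap.sub_apply, LinearMap.smul_apply, LinearMap.id_apply,
      this, map_sub, map_smul]
    push_cast
    rw [hXw, hw]
  have main : ∀ (j : ℕ) (z : V) (w : V₁), (w : V) = Y z → ((T₁ ^ j) w : V) = Y ((T ^ j) z) := by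
    intro j
    induction j with
    | zero => intro z w hw; simpa using hw
    | succ n ih =>
      intro z w hw
      rw [pow_succ, pow_succ, Module.End.mul_apply, Module.End.mul_apply]
      exact ih (T z) (T₁ w) (key z w hw)
  refine ⟨hYV1 v, ?_⟩
  intro w hw
  obtain ⟨j, hj⟩ := hv
  refine ⟨j, ?_⟩
  have := main j v w hw
  rw [hj, map_zero] at this
  exact Subtype.ext this
end

section
/- Let M be a connected complex reductive algebraic group with Lie algebra m, and let H ⊆ M be a reductive subgroup with Lie algebra h. Fix a nondegenerate symmetric M-invariant bilinear form on m and let h^⊥ be the annihilator of h. Then for every x ∈ h^⊥, 2·dim(Ad(H)·x) ≤ dim(Ad(M)·x). -/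
/-- Panyushev's inequality: for a reductive pair `(M, H)` with Lie algebras `(L, H)` and a
nondegenerate symmetric invariant form `B` (restricting nondegenerately to `H`), and any
`x` in the annihilator `h^⊥` of `H`, one has `2·dim(Ad(H)·x) ≤ dim(Ad(M)·x)`, where the
orbit dimensions are `dim h - dim z_h(x)` and `dim m - dim z_m(x)` respectively. -/
theorem stmt5 (L : Type*) [LieRing L] [LieAlgebra ℂ L] [Module.Finite ℂ L]
    (B : LinearMap.BilinForm ℂ L)
    (hsymm : ∀ x y : L, B x y = B y x)
    (hinv : ∀ x y z : L, B ⁅x, y⁆ z = B x ⁅y, z⁆)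
    (hnd : ∀ x : L, (∀ y : L, B x y = 0) → x = 0)
    (H : LieSubalgebra ℂ L)
    (hndH : ∀ x ∈ H, (∀ y ∈ H, B x y = 0) → x = 0)
    (x : L) (hx : ∀ z ∈ H, B z x = 0) :
    2 * (Module.finrank ℂ H -
        Module.finrank ℂ (Submodule.span ℂ {z : L | z ∈ H ∧ ⁅z, x⁆ = 0}))
      ≤ Module.finrank ℂ L -
        Module.finrank ℂ (Submodule.span ℂ {z : L | ⁅z, x⁆ = 0}) := by
  classical
  -- the linear map a ↦ ⁅a, x⁆
  let T : L →ₗ[ℂ] L :=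
    { toFun := fun a => ⁅a, x⁆
      map_add' := fun a b => add_lie a b x
      map_smul' := fun c a => smul_lie c a x }
  -- the "symplectic" form A a b = B ⁅a,x⁆ b
  let A : L →ₗ[ℂ] L →ₗ[ℂ] ℂ := LinearMap.comp B T
  have hAapp : ∀ a b : L, A a b = B ⁅a, x⁆ b := fun a b => rfl
  -- skew-symmetry of A
  have hskew : ∀ a b : L, A a b = - A b a := by
    intro a b
    have h1 : A b a = B b ⁅x, a⁆ := by rw [hAapp, hinv]
    have h2 : B b ⁅x, a⁆ = B ⁅x, a⁆ b := hsymm _ _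
    have h3 : (⁅x, a⁆ : L) = -⁅a, x⁆ := (lie_skew x a).symm
    rw [hAapp, h1, h2, h3, map_neg, LinearMap.neg_apply, neg_neg]
  -- the centralizer of x is the kernel of A
  have hker : {z : L | ⁅z, x⁆ = 0} = ↑(LinearMap.ker A) := by
    ext z
    simp only [Set.mem_setOf_eq, SetLike.mem_coe, LinearMap.mem_ker]
    constructor
    · intro h
      ext b
      simp only [LinearMap.zero_apply]
      rw [hAapp, h, map_zero, LinearMap.zero_apply]
    · intro h
      apply hnd
      intro y
      have := congrArg (fun f => f y) h
      simpa [hAapp] using this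
  have hkerspan : Submodule.span ℂ {z : L | ⁅z, x⁆ = 0} = LinearMap.ker A := by
    rw [hker, Submodule.span_eq]
  set W : Submodule ℂ L := H.toSubmodule with hW
  have hcspan : Submodule.span ℂ {z : L | z ∈ H ∧ ⁅z, x⁆ = 0} = W ⊓ LinearMap.ker A := by
    have : {z : L | z ∈ H ∧ ⁅z, x⁆ = 0} = ↑(W ⊓ LinearMap.ker A) := by
      ext z
      simp only [Set.mem_setOf_eq, Submodule.mem_inf, SetLike.mem_coe]
      constructor
      · rintro ⟨h1, h2⟩
        refine ⟨h1, ?_⟩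
        have : z ∈ ({z : L | ⁅z, x⁆ = 0} : Set L) := h2
        rw [hker] at this; exact this
      · rintro ⟨h1, h2⟩
        refine ⟨h1, ?_⟩
        have : z ∈ ({z : L | ⁅z, x⁆ = 0} : Set L) := by rw [hker]; exact h2
        exact this
    rw [this, Submodule.span_eq]
  -- isotropy of H
  have hiso : ∀ z ∈ H, ∀ w ∈ H, A z w = 0 := by
    intro z hz w hw
    have : A z w = B ⁅w, z⁆ x := by
      rw [hAapp, hinv, hsymm, hinv, hsymm]
    rw [this]
    exact hx _ (H.lie_mem hw hz)
  -- the restricted pairing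
  let φ : ↥W →ₗ[ℂ] (L →ₗ[ℂ] ℂ) := A.domRestrict W
  have hφker : Module.finrank ℂ (LinearMap.ker φ) =
      Module.finrank ℂ ↥(W ⊓ LinearMap.ker A) := by
    have h1 : LinearMap.ker φ = Submodule.comap W.subtype (LinearMap.ker A) := by
      ext w; simp [φ, LinearMap.domRestrict]
    rw [h1, ← Submodule.map_comap_subtype]
    exact (Submodule.equivMapOfInjective W.subtype W.injective_subtype _).finrank_eq
  -- rank of φ equals rank of its flip
  have hflip : φ.flip = φ.dualMap.comp (Module.Dual.eval ℂ L) := by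
    ext v w; rfl
  have hrankflip : Module.finrank ℂ (LinearMap.range φ.flip) =
      Module.finrank ℂ (LinearMap.range φ) := by
    have h1 : LinearMap.range φ.flip = LinearMap.range φ.dualMap := by
      rw [hflip, LinearMap.range_comp]
      rw [← Module.evalEquiv_toLinearMap, LinearEquiv.range, Submodule.map_top]
    rw [h1]
    exact LinearMap.finrank_range_dualMap_eq_finrank_range φ
  -- W ⊔ ker A is contained in ker φ.flip
  have hsub : W ⊔ LinearMap.ker A ≤ LinearMap.ker φ.flip := by
    apply sup_le
    · intro v hv
      rw [LinearMap.mem_ker]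
      ext w
      exact hiso w.1 w.2 v hv
    · intro v hv
      rw [LinearMap.mem_ker]
      ext w
      have : A v = 0 := hv
      have h2 : A (w : L) v = - A v (w : L) := hskew _ _
      simp only [LinearMap.flip_apply, LinearMap.zero_apply]
      rw [show φ w v = A (w : L) v from rfl, h2, this]
      simp
  -- dimension bookkeeping
  have e1 : Module.finrank ℂ (LinearMap.range φ) + Module.finrank ℂ (LinearMap.ker φ)
      = Module.finrank ℂ ↥W := LinearMap.finrank_range_add_finrank_ker φ
  have e2 : Module.finrank ℂ (LinearMap.range φ.flip)
      + Module.finrank ℂ (LinearMap.ker φ.flip) = Module.finrank ℂ L :=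
    LinearMap.finrank_range_add_finrank_ker φ.flip
  have e3 : Module.finrank ℂ ↥(W ⊔ LinearMap.ker A)
      + Module.finrank ℂ ↥(W ⊓ LinearMap.ker A)
      = Module.finrank ℂ ↥W + Module.finrank ℂ (LinearMap.ker A) :=
    Submodule.finrank_sup_add_finrank_inf_eq W (LinearMap.ker A)
  have e4 : Module.finrank ℂ ↥(W ⊔ LinearMap.ker A)
      ≤ Module.finrank ℂ (LinearMap.ker φ.flip) := Submodule.finrank_mono hsub
  have e5 : Module.finrank ℂ H = Module.finrank ℂ ↥W := rfl
  rw [hkerspan, hcspan, e5, hφker] at *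
  omega
end

section
/- Let g = so(n, ℂ), k = so(n−1, ℂ) embedded as the fixed points of the involution θ, and let x ∈ g be such that z_k(x_k) ∩ z_g(x) = 0, where x_k is the projection of x to k. Then x is a regular element of g and x_k is a regular element of k, i.e. dim z_g(x) = ⌊n/2⌋ and dim z_k(x_k) = ⌊(n−1)/2⌋. -/
open Matrix Module

namespace SO6


noncomputable section

variable {ρ ι : Type*} [Fintype ρ] [Fintype ι] [DecidableEq ρ] [DecidableEq ι]

lemma submatrix_eq_mul {k : ℕ} (A : Matrix ρ ι ℂ) (f : Fin k → ρ) (g : Fin k → ι) :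
    A.submatrix f g =
      (Matrix.of fun (a : Fin k) b => if b = f a then (1:ℂ) else 0) * A *
      (Matrix.of fun b (c : Fin k) => if b = g c then (1:ℂ) else 0) := by
  ext a c
  simp only [Matrix.mul_apply, Matrix.submatrix_apply, Matrix.of_apply]
  simp only [mul_ite, mul_one, mul_zero, ite_mul, one_mul, zero_mul,
    Finset.sum_ite_eq', Finset.mem_univ, if_true]

lemma rank_submatrix_le'' {k : ℕ} (A : Matrix ρ ι ℂ) (f : Fin k → ρ) (g : Fin k → ι) :
    (A.submatrix f g).rank ≤ A.rank := by
  rw [submatrix_eq_mul A f g]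
  exact le_trans (Matrix.rank_mul_le_left _ _) (Matrix.rank_mul_le_right _ _)

lemma exists_comp_linearIndependent {W : Type*} [AddCommGroup W] [Module ℂ W]
    [FiniteDimensional ℂ W] (v : ι → W) (k : ℕ)
    (h : k ≤ finrank ℂ (Submodule.span ℂ (Set.range v))) :
    ∃ g : Fin k → ι, LinearIndependent ℂ (v ∘ g) := by
  obtain ⟨s, hsub, hspan, hind⟩ := exists_linearIndependent ℂ (Set.range v)
  have hfin : s.Finite := hind.setFinite
  haveI := hfin.fintype
  have hcard : finrank ℂ (Submodule.span ℂ s) = s.toFinset.card :=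
    finrank_span_set_eq_card hind
  have hk : k ≤ Fintype.card s := by
    rw [hspan] at hcard
    rw [Set.toFinset_card] at hcard
    omega
  obtain ⟨e⟩ := Function.Embedding.nonempty_of_card_le (by simpa using hk :
    Fintype.card (Fin k) ≤ Fintype.card s)
  choose pre hpre using fun a : Fin k => hsub (e a).2
  refine ⟨pre, ?_⟩
  have : v ∘ pre = fun a : Fin k => ((e a : s) : W) := by
    funext a; exact hpre a
  rw [this]
  exact hind.comp e e.injective

lemma det_ne_zero_of_rows {k : ℕ} (S : Matrix (Fin k) (Fin k) ℂ)
    (h : LinearIndependent ℂ (fun i => S i)) : S.det ≠ 0 := by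
  rw [← Matrix.det_transpose]
  intro hdet
  obtain ⟨v, hv, hmul⟩ := (Matrix.exists_mulVec_eq_zero_iff).2 hdet
  apply hv
  have : ∀ i, ∑ j, v j * S j i = 0 := by
    intro i
    have := congrFun hmul i
    simpa [Matrix.mulVec, dotProduct, Matrix.transpose_apply, mul_comm] using this
  have h0 : ∑ j, v j • S j = 0 := by
    funext i
    simpa [Finset.sum_apply] using this i
  have := Fintype.linearIndependent_iff.1 h v h0
  funext j; exact this j

lemma rank_le_of_minors (A : Matrix ρ ι ℂ) (r : ℕ)
    (h : ∀ (f : Fin (r+1) → ρ) (g : Fin (r+1) → ι), (A.submatrix f g).det = 0) :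
    A.rank ≤ r := by
  by_contra hlt
  push_neg at hlt
  have h1 : r + 1 ≤ A.rank := hlt
  rw [Matrix.rank_eq_finrank_span_cols] at h1
  obtain ⟨g, hg⟩ := exists_comp_linearIndependent (fun j => Aᵀ j) (r+1) h1
  set B : Matrix ρ (Fin (r+1)) ℂ := A.submatrix id g with hB
  have hBT : Bᵀ = fun j => Aᵀ (g j) := by
    funext j i; rfl
  have hrB : B.rank = r + 1 := by
    rw [Matrix.rank_eq_finrank_span_cols, show B.col = Bᵀ from rfl, hBT]
    have := finrank_span_eq_card hg
    rw [Function.comp_def] at this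
    rw [this]
    simp
  have hrBT : Bᵀ.rank = r + 1 := by rw [Matrix.rank_transpose]; exact hrB
  have h2 : r + 1 ≤ finrank ℂ (Submodule.span ℂ (Set.range fun c => Bᵀᵀ c)) := by
    change r + 1 ≤ finrank ℂ (Submodule.span ℂ (Set.range Bᵀ.col))
    rw [← Matrix.rank_eq_finrank_span_cols]
    omega
  obtain ⟨f, hf⟩ := exists_comp_linearIndependent (fun c => Bᵀᵀ c) (r+1) h2
  have : (A.submatrix f g).det ≠ 0 := by
    apply det_ne_zero_of_rows
    have : (fun i => (A.submatrix f g) i) = (fun c => Bᵀᵀ c) ∘ f := by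
      funext i; funext j; rfl
    rw [this]; exact hf
  exact this (h f g)

end



noncomputable section

set_option linter.unusedSectionVars false

variable {n : ℕ}

/-- Skew-symmetric matrices supported in the top-left `m × m` block. -/
def skewSupp (n m : ℕ) : Submodule ℂ (Matrix (Fin n) (Fin n) ℂ) where
  carrier := {Z | Zᵀ = -Z ∧ ∀ i j : Fin n, (m ≤ (i:ℕ) ∨ m ≤ (j:ℕ)) → Z i j = 0}
  add_mem' := by
    rintro a b ⟨ha1, ha2⟩ ⟨hb1, hb2⟩
    refine ⟨by rw [Matrix.transpose_add, ha1, hb1]; abel, fun i j h => ?_⟩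
    simp [Matrix.add_apply, ha2 i j h, hb2 i j h]
  zero_mem' := by
    refine ⟨by simp, fun i j h => rfl⟩
  smul_mem' := by
    rintro c a ⟨ha1, ha2⟩
    refine ⟨by rw [Matrix.transpose_smul, ha1, smul_neg], fun i j h => ?_⟩
    simp [Matrix.smul_apply, ha2 i j h]

lemma mem_skewSupp {m : ℕ} {Z : Matrix (Fin n) (Fin n) ℂ} :
    Z ∈ skewSupp n m ↔ Zᵀ = -Z ∧ ∀ i j : Fin n, (m ≤ (i:ℕ) ∨ m ≤ (j:ℕ)) → Z i j = 0 :=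
  Iff.rfl

/-- Matrices commuting with `y`. -/
def comms (y : Matrix (Fin n) (Fin n) ℂ) : Submodule ℂ (Matrix (Fin n) (Fin n) ℂ) where
  carrier := {Z | Z * y = y * Z}
  add_mem' := by
    rintro a b ha hb
    show (a + b) * y = y * (a + b)
    rw [add_mul, mul_add, ha, hb]
  zero_mem' := by show (0:Matrix (Fin n) (Fin n) ℂ) * y = y * 0; simp
  smul_mem' := by
    rintro c a ha
    show (c • a) * y = y * (c • a)
    rw [Matrix.smul_mul, Matrix.mul_smul, ha]

def centSupp (n m : ℕ) (y : Matrix (Fin n) (Fin n) ℂ) : Submodule ℂ (Matrix (Fin n) (Fin n) ℂ) :=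
  skewSupp n m ⊓ comms y

lemma mem_centSupp {m : ℕ} {y Z : Matrix (Fin n) (Fin n) ℂ} :
    Z ∈ centSupp n m y ↔
      (Zᵀ = -Z ∧ ∀ i j : Fin n, (m ≤ (i:ℕ) ∨ m ≤ (j:ℕ)) → Z i j = 0) ∧ Z * y = y * Z :=
  Iff.rfl

/-- skew entries: `Z j i = - Z i j`. -/
lemma skew_apply {Z : Matrix (Fin n) (Fin n) ℂ} (hZ : Zᵀ = -Z) (i j : Fin n) :
    Z j i = - Z i j := by
  have := congrFun (congrFun hZ i) j
  simpa [Matrix.transpose_apply, Matrix.neg_apply] using this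

lemma skew_diag {Z : Matrix (Fin n) (Fin n) ℂ} (hZ : Zᵀ = -Z) (i : Fin n) : Z i i = 0 := by
  have h := skew_apply hZ i i
  have h2 : Z i i + Z i i = 0 := by nth_rewrite 2 [h]; exact add_neg_cancel _
  exact add_self_eq_zero.mp h2

/-- index type for the basis of `skewSupp n m` -/
abbrev SIdx (n m : ℕ) := {p : Fin n × Fin n // (p.1:ℕ) < (p.2:ℕ) ∧ (p.2:ℕ) < m}

def sBasis (n m : ℕ) (p : SIdx n m) : Matrix (Fin n) (Fin n) ℂ :=
  Matrix.single p.1.1 p.1.2 1 - Matrix.single p.1.2 p.1.1 1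

lemma sBasis_apply (p : SIdx n m) (i j : Fin n) :
    sBasis n m p i j = (if p.1.1 = i ∧ p.1.2 = j then (1:ℂ) else 0)
      - (if p.1.2 = i ∧ p.1.1 = j then (1:ℂ) else 0) := by
  simp [sBasis, Matrix.single, Matrix.sub_apply]

def sIdxEquiv (m : ℕ) (hm : m ≤ n) : SIdx n m ≃ Σ j : Fin m, Fin (j:ℕ) where
  toFun p := ⟨⟨(p.1.2:ℕ), p.2.2⟩, ⟨(p.1.1:ℕ), p.2.1⟩⟩
  invFun q := ⟨(⟨(q.2:ℕ), by have h1 := q.2.isLt; have h2 := q.1.isLt; omega⟩,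
      ⟨(q.1:ℕ), by have h2 := q.1.isLt; omega⟩),
    by constructor <;> simp [q.2.isLt]⟩
  left_inv p := by
    apply Subtype.ext
    apply Prod.ext <;> apply Fin.ext <;> simp
  right_inv q := by
    apply Sigma.ext <;> simp [Fin.heq_ext_iff]

lemma card_sIdx (m : ℕ) (hm : m ≤ n) : 2 * Fintype.card (SIdx n m) = m * (m - 1) := by
  rw [Fintype.card_congr (sIdxEquiv m hm)]
  rw [Fintype.card_sigma]
  simp only [Fintype.card_fin]
  rw [Fin.sum_univ_eq_sum_range (fun j => j) m]
  rw [mul_comm]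
  exact Finset.sum_range_id_mul_two m

lemma sBasis_indep (m : ℕ) : LinearIndependent ℂ (sBasis n m) := by
  rw [Fintype.linearIndependent_iff]
  intro c hc q
  have h := congrFun (congrFun (congrArg (fun M => M) hc) q.1.1) q.1.2
  have h2 : ∑ p : SIdx n m, c p * sBasis n m p q.1.1 q.1.2 = 0 := by
    have := congrFun (congrFun hc q.1.1) q.1.2
    simpa [Matrix.sum_apply, Matrix.smul_apply, smul_eq_mul] using this
  rw [Finset.sum_eq_single q] at h2
  · have hq1 : sBasis n m q q.1.1 q.1.2 = 1 := by
      rw [sBasis_apply]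
      have hlt := q.2.1
      rw [if_pos ⟨rfl, rfl⟩, if_neg]
      · ring
      · rintro ⟨ha, hb⟩
        rw [Fin.ext_iff] at ha hb
        omega
    rw [hq1, mul_one] at h2
    exact h2
  · intro p _ hpq
    have hp1 := p.2.1
    have hq1 := q.2.1
    rw [sBasis_apply]
    have : ¬(p.1.1 = q.1.1 ∧ p.1.2 = q.1.2) := by
      rintro ⟨ha, hb⟩
      exact hpq (Subtype.ext (Prod.ext ha hb))
    rw [if_neg this, if_neg]
    · ring
    · rintro ⟨ha, hb⟩
      rw [Fin.ext_iff] at ha hb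
      omega
  · intro hq
    exact absurd (Finset.mem_univ q) hq

lemma sBasis_mem (m : ℕ) (p : SIdx n m) : sBasis n m p ∈ skewSupp n m := by
  have hp1 := p.2.1
  have hp2 := p.2.2
  constructor
  · ext i j
    simp only [Matrix.transpose_apply, Matrix.neg_apply, sBasis_apply]
    have h1 : (p.1.1 = j ∧ p.1.2 = i) ↔ (p.1.2 = i ∧ p.1.1 = j) := and_comm
    have h2 : (p.1.2 = j ∧ p.1.1 = i) ↔ (p.1.1 = i ∧ p.1.2 = j) := and_comm
    rw [if_congr h1 rfl rfl, if_congr h2 rfl rfl]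
    ring
  · intro i j h
    rw [sBasis_apply, if_neg, if_neg]
    · ring
    · rintro ⟨ha, hb⟩
      rw [Fin.ext_iff] at ha hb
      omega
    · rintro ⟨ha, hb⟩
      rw [Fin.ext_iff] at ha hb
      omega

lemma skewSupp_eq_span (m : ℕ) (hm : m ≤ n) :
    skewSupp n m = Submodule.span ℂ (Set.range (sBasis n m)) := by
  apply le_antisymm
  · intro Z hZ
    obtain ⟨h1, h2⟩ := hZ
    have hrep : Z = ∑ p : SIdx n m, Z p.1.1 p.1.2 • sBasis n m p := by
      ext i j
      rw [Matrix.sum_apply]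
      simp only [Matrix.smul_apply, smul_eq_mul]
      rcases lt_trichotomy (i:ℕ) (j:ℕ) with hij | hij | hij
      · by_cases hjm : (j:ℕ) < m
        · rw [Finset.sum_eq_single (⟨(i,j), hij, hjm⟩ : SIdx n m)]
          · rw [sBasis_apply, if_pos ⟨rfl, rfl⟩, if_neg]
            · ring
            · rintro ⟨ha, hb⟩
              rw [Fin.ext_iff] at ha hb
              simp only [] at ha hb; omega
          · intro p _ hpq
            have hp1 := p.2.1
            have hp2 := p.2.2
            rw [sBasis_apply, if_neg, if_neg]
            · ring
            · rintro ⟨ha, hb⟩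
              rw [Fin.ext_iff] at ha hb
              omega
            · rintro ⟨ha, hb⟩
              apply hpq
              exact Subtype.ext (Prod.ext ha hb)
          · intro hq
            exact absurd (Finset.mem_univ _) hq
        · rw [h2 i j (Or.inr (by omega)), Finset.sum_eq_zero]
          intro p _
          have hp1 := p.2.1
          have hp2 := p.2.2
          rw [sBasis_apply, if_neg, if_neg]
          · ring
          · rintro ⟨ha, hb⟩
            rw [Fin.ext_iff] at ha hb
            omega
          · rintro ⟨ha, hb⟩
            rw [Fin.ext_iff] at ha hb
            omega
      · have hij' : i = j := Fin.ext hij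
        subst hij'
        rw [skew_diag h1 i, Finset.sum_eq_zero]
        intro p _
        have hp1 := p.2.1
        rw [sBasis_apply, if_neg, if_neg]
        · ring
        · rintro ⟨ha, hb⟩
          rw [Fin.ext_iff] at ha hb
          omega
        · rintro ⟨ha, hb⟩
          rw [Fin.ext_iff] at ha hb
          omega
      · by_cases him : (i:ℕ) < m
        · rw [Finset.sum_eq_single (⟨(j,i), hij, him⟩ : SIdx n m)]
          · rw [sBasis_apply, if_neg, if_pos ⟨rfl, rfl⟩]
            · rw [skew_apply h1 j i]
              ring
            · rintro ⟨ha, hb⟩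
              rw [Fin.ext_iff] at ha hb
              simp only [] at ha hb; omega
          · intro p _ hpq
            have hp1 := p.2.1
            have hp2 := p.2.2
            rw [sBasis_apply, if_neg, if_neg]
            · ring
            · rintro ⟨ha, hb⟩
              apply hpq
              exact Subtype.ext (Prod.ext hb ha)
            · rintro ⟨ha, hb⟩
              rw [Fin.ext_iff] at ha hb
              omega
          · intro hq
            exact absurd (Finset.mem_univ _) hq
        · rw [h2 i j (Or.inl (by omega)), Finset.sum_eq_zero]
          intro p _
          have hp1 := p.2.1
          have hp2 := p.2.2
          rw [sBasis_apply, if_neg, if_neg]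
          · ring
          · rintro ⟨ha, hb⟩
            rw [Fin.ext_iff] at ha hb
            omega
          · rintro ⟨ha, hb⟩
            rw [Fin.ext_iff] at ha hb
            omega
    rw [hrep]
    apply Submodule.sum_mem
    intro p _
    exact Submodule.smul_mem _ _ (Submodule.subset_span (Set.mem_range_self p))
  · rw [Submodule.span_le]
    rintro _ ⟨p, rfl⟩
    exact sBasis_mem m p

lemma twice_finrank_skewSupp (m : ℕ) (hm : m ≤ n) :
    2 * finrank ℂ (skewSupp n m) = m * (m - 1) := by
  rw [skewSupp_eq_span m hm, finrank_span_eq_card (sBasis_indep m), card_sIdx m hm]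

end



noncomputable section

set_option linter.unusedSectionVars false
set_option maxHeartbeats 1000000

variable {n : ℕ}

abbrev Ix (n : ℕ) := Fin n × Fin n

/-- The big linear system whose kernel is `centSupp n m y` (in vectorized form),
    with entries in an arbitrary commutative ring. -/
def bigM {S : Type*} [CommRing S] (n m : ℕ) (y : Matrix (Fin n) (Fin n) S) :
    Matrix (Ix n ⊕ Ix n ⊕ Ix n) (Ix n) S :=
  fun r c =>
    match r with
    | .inl (i,j) => (if c.1 = i then y c.2 j else 0) - (if c.2 = j then y i c.1 else 0)
    | .inr (.inl (i,j)) => (if c = (i,j) then 1 else 0) + (if c = (j,i) then 1 else 0)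
    | .inr (.inr (i,j)) => if ((m ≤ (i:ℕ) ∨ m ≤ (j:ℕ)) ∧ c = (i,j)) then 1 else 0

def vecOf (Z : Matrix (Fin n) (Fin n) ℂ) : Ix n → ℂ := fun p => Z p.1 p.2

def vecEquiv (n : ℕ) : Matrix (Fin n) (Fin n) ℂ ≃ₗ[ℂ] (Ix n → ℂ) where
  toFun := vecOf
  invFun f := Matrix.of fun i j => f (i,j)
  map_add' a b := rfl
  map_smul' c a := rfl
  left_inv a := rfl
  right_inv f := rfl

lemma bigM_mulVec_inl (m : ℕ) (y Z : Matrix (Fin n) (Fin n) ℂ) (i j : Fin n) :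
    (bigM n m y).mulVec (vecOf Z) (Sum.inl (i,j)) = (Z * y - y * Z) i j := by
  simp only [Matrix.mulVec, dotProduct, bigM, vecOf]
  rw [Fintype.sum_prod_type]
  simp only [sub_mul, ite_mul, zero_mul, Finset.sum_sub_distrib, Finset.sum_ite_irrel,
    Finset.sum_const_zero, Finset.sum_ite_eq', Finset.sum_ite_eq, Finset.mem_univ, if_true]
  rw [Matrix.sub_apply, Matrix.mul_apply, Matrix.mul_apply]
  congr 1
  exact Finset.sum_congr rfl fun c _ => mul_comm _ _

lemma bigM_mulVec_skew (m : ℕ) (y Z : Matrix (Fin n) (Fin n) ℂ) (i j : Fin n) :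
    (bigM n m y).mulVec (vecOf Z) (Sum.inr (Sum.inl (i,j))) = Z i j + Z j i := by
  simp only [Matrix.mulVec, dotProduct, bigM, vecOf]
  simp only [add_mul, ite_mul, one_mul, zero_mul, Finset.sum_add_distrib,
    Finset.sum_ite_eq', Finset.mem_univ, if_true]

lemma bigM_mulVec_supp (m : ℕ) (y Z : Matrix (Fin n) (Fin n) ℂ) (i j : Fin n) :
    (bigM n m y).mulVec (vecOf Z) (Sum.inr (Sum.inr (i,j)))
      = if (m ≤ (i:ℕ) ∨ m ≤ (j:ℕ)) then Z i j else 0 := by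
  simp only [Matrix.mulVec, dotProduct, bigM, vecOf]
  simp only [ite_and, ite_mul, one_mul, zero_mul, Finset.sum_ite_irrel,
    Finset.sum_const_zero, Finset.sum_ite_eq', Finset.mem_univ, if_true]

lemma bigM_mulVec (m : ℕ) (y Z : Matrix (Fin n) (Fin n) ℂ) :
    (bigM n m y).mulVec (vecOf Z) = 0 ↔ Z ∈ centSupp n m y := by
  constructor
  · intro h
    have hskew : Zᵀ = -Z := by
      ext i j
      have := congrFun h (Sum.inr (Sum.inl (i,j)))
      rw [bigM_mulVec_skew] at this
      simp only [Pi.zero_apply] at this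
      simp only [Matrix.transpose_apply, Matrix.neg_apply]
      linear_combination this
    refine ⟨⟨hskew, ?_⟩, ?_⟩
    · intro i j hij
      have := congrFun h (Sum.inr (Sum.inr (i,j)))
      rw [bigM_mulVec_supp] at this
      simp only [Pi.zero_apply] at this
      rwa [if_pos hij] at this
    · show Z * y = y * Z
      rw [← sub_eq_zero]
      ext i j
      have := congrFun h (Sum.inl (i,j))
      rw [bigM_mulVec_inl] at this
      simpa using this
  · rintro ⟨⟨hskew, hsupp⟩, hcomm⟩
    funext r
    rcases r with p | p | p
    · obtain ⟨i, j⟩ := p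
      rw [bigM_mulVec_inl, hcomm]
      simp
    · obtain ⟨i, j⟩ := p
      rw [bigM_mulVec_skew, skew_apply hskew i j]
      simp
    · obtain ⟨i, j⟩ := p
      rw [bigM_mulVec_supp]
      simp only [Pi.zero_apply]
      split_ifs with hc
      · exact hsupp i j hc
      · rfl

lemma map_centSupp (m : ℕ) (y : Matrix (Fin n) (Fin n) ℂ) :
    (centSupp n m y).map (vecEquiv n).toLinearMap = LinearMap.ker (bigM n m y).mulVecLin := by
  ext w
  constructor
  · rintro ⟨Z, hZ, rfl⟩
    exact (bigM_mulVec m y Z).2 hZ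
  · intro hw
    refine ⟨(vecEquiv n).symm w, ?_, by simp⟩
    have h2 : vecOf ((vecEquiv n).symm w) = w := rfl
    exact (bigM_mulVec m y _).1 (by rw [h2]; exact hw)

lemma finrank_centSupp_eq (m : ℕ) (y : Matrix (Fin n) (Fin n) ℂ) :
    finrank ℂ (centSupp n m y) + (bigM n m y).rank = n * n := by
  have h1 : finrank ℂ (centSupp n m y)
      = finrank ℂ (LinearMap.ker (bigM n m y).mulVecLin) := by
    rw [← map_centSupp m y]
    exact ((vecEquiv n).submoduleMap (centSupp n m y)).finrank_eq
  rw [h1, Matrix.rank]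
  rw [add_comm]
  rw [LinearMap.finrank_range_add_finrank_ker (bigM n m y).mulVecLin]
  simp [Module.finrank_pi]

/-! ### Genericity: lower bound for the centralizer dimension -/

open MvPolynomial in
def Ypoly (n m : ℕ) : Matrix (Fin n) (Fin n) (MvPolynomial (Ix n) ℂ) :=
  Matrix.of fun i j => if (i:ℕ) < m ∧ (j:ℕ) < m then X (i,j) - X (j,i) else 0

def yOf (n m : ℕ) (t : Ix n → ℂ) : Matrix (Fin n) (Fin n) ℂ :=
  Matrix.of fun i j => if (i:ℕ) < m ∧ (j:ℕ) < m then t (i,j) - t (j,i) else 0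

lemma map_Ypoly (m : ℕ) (t : Ix n → ℂ) :
    (Ypoly n m).map (MvPolynomial.eval t) = yOf n m t := by
  ext i j
  simp [Ypoly, yOf, apply_ite (MvPolynomial.eval t)]

lemma map_bigM (m : ℕ) (t : Ix n → ℂ) :
    (bigM n m (Ypoly n m)).map (MvPolynomial.eval t) = bigM n m (yOf n m t) := by
  ext r c
  rcases r with p | p | p
  · obtain ⟨i, j⟩ := p
    simp only [bigM, Matrix.map_apply, map_sub, apply_ite (MvPolynomial.eval t), map_zero]
    rw [← map_Ypoly m t]
    rfl
  · obtain ⟨i, j⟩ := p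
    simp only [bigM, Matrix.map_apply, map_add, apply_ite (MvPolynomial.eval t), map_zero, _root_.map_one]
  · obtain ⟨i, j⟩ := p
    simp only [bigM, Matrix.map_apply, apply_ite (MvPolynomial.eval t), map_zero, _root_.map_one]

lemma yOf_mem (m : ℕ) (t : Ix n → ℂ) : yOf n m t ∈ skewSupp n m := by
  constructor
  · ext i j
    simp only [Matrix.transpose_apply, Matrix.neg_apply, yOf, Matrix.of_apply]
    have : ((j:ℕ) < m ∧ (i:ℕ) < m) ↔ ((i:ℕ) < m ∧ (j:ℕ) < m) := and_comm
    rw [if_congr this rfl rfl]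
    split_ifs <;> ring
  · intro i j h
    simp only [yOf, Matrix.of_apply]
    rw [if_neg (by omega)]

lemma yOf_self (m : ℕ) {y : Matrix (Fin n) (Fin n) ℂ} (hy : y ∈ skewSupp n m) :
    yOf n m (fun p => y p.1 p.2 / 2) = y := by
  obtain ⟨h1, h2⟩ := hy
  ext i j
  simp only [yOf, Matrix.of_apply]
  split_ifs with h
  · rw [skew_apply h1 i j]
    ring
  · rw [h2 i j (by omega)]

lemma map_pow_matrix {S T : Type*} [CommRing S] [CommRing T] (f : S →+* T)
    (A : Matrix (Fin n) (Fin n) S) (k : ℕ) : (A ^ k).map f = (A.map f) ^ k := by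
  have := map_pow f.mapMatrix A k
  simpa [RingHom.mapMatrix_apply] using this

def kry {S : Type*} [CommRing S] (n m : ℕ) (h0 : 0 < n) (hm : m ≤ n)
    (A : Matrix (Fin n) (Fin n) S) : Matrix (Fin m) (Fin m) S :=
  Matrix.of fun k j => (A ^ (j:ℕ)) ⟨0, h0⟩ (Fin.castLE hm k)

lemma map_kry {S T : Type*} [CommRing S] [CommRing T] (f : S →+* T) (m : ℕ)
    (h0 : 0 < n) (hm : m ≤ n) (A : Matrix (Fin n) (Fin n) S) :
    (kry n m h0 hm A).map f = kry n m h0 hm (A.map f) := by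
  ext k j
  simp only [kry, Matrix.map_apply, Matrix.of_apply]
  rw [← map_pow_matrix f A]
  rfl

def twit (n m : ℕ) : Ix n → ℂ := fun p => if (p.2:ℕ) = (p.1:ℕ)+1 ∧ (p.2:ℕ) < m then 1 else 0

lemma y0_apply (m : ℕ) (a b : Fin n) :
    yOf n m (twit n m) a b = if (a:ℕ) < m ∧ (b:ℕ) < m then
      ((if (b:ℕ) = (a:ℕ)+1 then (1:ℂ) else 0) - (if (a:ℕ) = (b:ℕ)+1 then (1:ℂ) else 0))
    else 0 := by
  by_cases h : (a:ℕ) < m ∧ (b:ℕ) < m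
  · simp only [yOf, Matrix.of_apply, twit, if_pos h]
    congr 1
    · rw [if_congr (and_iff_left h.2) rfl rfl]
    · rw [if_congr (and_iff_left h.1) rfl rfl]
  · simp only [yOf, Matrix.of_apply, twit, if_neg h]

lemma walk_zero (m : ℕ) : ∀ (j : ℕ) (a b : Fin n), (a:ℕ) + j < (b:ℕ) →
    ((yOf n m (twit n m)) ^ j) a b = 0 := by
  intro j
  induction j with
  | zero =>
    intro a b h
    rw [pow_zero]
    exact Matrix.one_apply_ne (by rintro rfl; omega)
  | succ j ih =>
    intro a b h
    rw [pow_succ, Matrix.mul_apply]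
    apply Finset.sum_eq_zero
    intro c _
    by_cases hc : (a:ℕ) + j < (c:ℕ)
    · rw [ih a c hc, zero_mul]
    · have h1 : ¬((b:ℕ) = (c:ℕ)+1) := by omega
      have h2 : ¬((c:ℕ) = (b:ℕ)+1) := by omega
      simp [y0_apply, h1, h2]

lemma walk_one (m : ℕ) : ∀ (j : ℕ) (a b : Fin n), (b:ℕ) = (a:ℕ) + j → (b:ℕ) < m →
    ((yOf n m (twit n m)) ^ j) a b = 1 := by
  intro j
  induction j with
  | zero =>
    intro a b hb hbm
    have : a = b := Fin.ext (by omega)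
    rw [this, pow_zero]
    exact Matrix.one_apply_eq b
  | succ j ih =>
    intro a b hb hbm
    have hcn : (a:ℕ) + j < n := by have := b.isLt; omega
    set c0 : Fin n := ⟨(a:ℕ)+j, hcn⟩ with hc0def
    have hc0 : (c0:ℕ) = (a:ℕ)+j := rfl
    rw [pow_succ, Matrix.mul_apply, Finset.sum_eq_single c0]
    · rw [ih a c0 hc0.symm (by omega)]
      have e1 : (c0:ℕ) < m ∧ (b:ℕ) < m := ⟨by omega, hbm⟩
      have e2 : (b:ℕ) = (c0:ℕ)+1 := by omega
      have e3 : ¬((c0:ℕ) = (b:ℕ)+1) := by omega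
      rw [y0_apply, if_pos e1, if_pos e2, if_neg e3]
      ring
    · intro c _ hne
      by_cases h1 : (b:ℕ) = (c:ℕ)+1
      · exact absurd (Fin.ext (by omega : (c:ℕ) = (c0:ℕ))) hne
      · by_cases h2 : (c:ℕ) = (b:ℕ)+1
        · rw [walk_zero m j a c (by omega), zero_mul]
        · simp [y0_apply, h1, h2]
    · intro hc
      exact absurd (Finset.mem_univ _) hc

lemma kry_twit_det (m : ℕ) (h0 : 0 < n) (hm : m ≤ n) :
    (kry n m h0 hm (yOf n m (twit n m))).det = 1 := by
  have htri : (kry n m h0 hm (yOf n m (twit n m))).BlockTriangular id := by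
    intro k j hjk
    exact walk_zero m (j:ℕ) ⟨0,h0⟩ (Fin.castLE hm k) (by simpa using hjk)
  rw [Matrix.det_of_upperTriangular htri]
  apply Finset.prod_eq_one
  intro k _
  exact walk_one m (k:ℕ) ⟨0,h0⟩ (Fin.castLE hm k) (by simp) (by simpa using k.isLt)

lemma powers_indep_of_det (m : ℕ) (h0 : 0 < n) (hm : m ≤ n) {y : Matrix (Fin n) (Fin n) ℂ}
    (hdet : (kry n m h0 hm y).det ≠ 0) :
    LinearIndependent ℂ (fun j : Fin m => y ^ (j:ℕ)) := by
  rw [Fintype.linearIndependent_iff]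
  intro c hc j0
  have hv : (kry n m h0 hm y).mulVec c = 0 := by
    funext k
    have h1 := congrFun (congrFun hc ⟨0,h0⟩) (Fin.castLE hm k)
    simp only [Matrix.sum_apply, Matrix.smul_apply, smul_eq_mul, Pi.zero_apply,
      Matrix.zero_apply] at h1
    simpa [Matrix.mulVec, dotProduct, kry, mul_comm] using h1
  by_contra hne
  apply hdet
  rw [← Matrix.exists_mulVec_eq_zero_iff]
  exact ⟨c, fun hzero => hne (congrFun hzero j0), hv⟩

lemma pow_mem_supp (m : ℕ) {y : Matrix (Fin n) (Fin n) ℂ}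
    (hy : ∀ i j : Fin n, (m ≤ (i:ℕ) ∨ m ≤ (j:ℕ)) → y i j = 0) :
    ∀ k, 1 ≤ k → ∀ i j : Fin n, (m ≤ (i:ℕ) ∨ m ≤ (j:ℕ)) → (y ^ k) i j = 0 := by
  intro k
  induction k with
  | zero => omega
  | succ k ih =>
    intro _ i j hij
    rcases Nat.lt_or_ge k 1 with hk | hk
    · have : k = 0 := by omega
      subst this
      rw [pow_one]
      exact hy i j hij
    · rw [pow_succ, Matrix.mul_apply]
      apply Finset.sum_eq_zero
      intro c _
      rcases hij with hij | hij
      · rw [ih hk i c (Or.inl hij), zero_mul]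
      · rw [hy c j (Or.inr hij), mul_zero]

lemma centSupp_lb_of_indep (m : ℕ) {y : Matrix (Fin n) (Fin n) ℂ}
    (hy : y ∈ skewSupp n m)
    (hind : LinearIndependent ℂ (fun j : Fin m => y ^ (j:ℕ))) :
    m / 2 ≤ finrank ℂ (centSupp n m y) := by
  rcases Nat.eq_zero_or_pos (m/2) with hz | hpos
  · omega
  set g : Fin (m/2) → Fin m := fun i => ⟨2*(i:ℕ)+1, by have := i.isLt; omega⟩ with hg
  have hginj : Function.Injective g := by
    intro a b hab
    have : 2*(a:ℕ)+1 = 2*(b:ℕ)+1 := congrArg Fin.val hab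
    exact Fin.ext (by omega)
  have hindf : LinearIndependent ℂ ((fun j : Fin m => y ^ (j:ℕ)) ∘ g) := hind.comp g hginj
  have hmem : ∀ i : Fin (m/2), ((fun j : Fin m => y ^ (j:ℕ)) ∘ g) i ∈ centSupp n m y := by
    intro i
    refine ⟨⟨?_, ?_⟩, ?_⟩
    · show (y ^ (2*(i:ℕ)+1))ᵀ = -(y ^ (2*(i:ℕ)+1))
      rw [Matrix.transpose_pow, hy.1, Odd.neg_pow ⟨(i:ℕ), by ring⟩]
    · exact pow_mem_supp m hy.2 _ (by have : ((g i : Fin m):ℕ) = 2*(i:ℕ)+1 := rfl; omega)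
    · show y ^ (2*(i:ℕ)+1) * y = y * y ^ (2*(i:ℕ)+1)
      rw [← pow_succ, ← pow_succ']
  have hspan : Submodule.span ℂ (Set.range ((fun j : Fin m => y ^ (j:ℕ)) ∘ g))
      ≤ centSupp n m y := by
    rw [Submodule.span_le]
    rintro _ ⟨i, rfl⟩
    exact hmem i
  calc m / 2 = finrank ℂ (Submodule.span ℂ (Set.range ((fun j : Fin m => y ^ (j:ℕ)) ∘ g))) := by
        rw [finrank_span_eq_card hindf, Fintype.card_fin]
    _ ≤ finrank ℂ (centSupp n m y) := Submodule.finrank_mono hspan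

lemma core (m : ℕ) (hm : m ≤ n) {y : Matrix (Fin n) (Fin n) ℂ} (hy : y ∈ skewSupp n m) :
    m / 2 ≤ finrank ℂ (centSupp n m y) := by
  rcases Nat.lt_or_ge m 2 with h2 | h2
  · have : m / 2 = 0 := by omega
    omega
  have h0 : 0 < n := by omega
  set NN := n * n with hNN
  have hmNN : m / 2 ≤ NN := le_trans (by omega) (Nat.le_mul_of_pos_left n h0)
  set r := NN - m / 2 with hr
  set D := (kry n m h0 hm (Ypoly n m)).det with hD
  have hevalD : ∀ t : Ix n → ℂ, MvPolynomial.eval t D = (kry n m h0 hm (yOf n m t)).det := by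
    intro t
    rw [hD]
    calc (MvPolynomial.eval t) (kry n m h0 hm (Ypoly n m)).det
        = ((kry n m h0 hm (Ypoly n m)).map (MvPolynomial.eval t)).det :=
          RingHom.map_det _ _
      _ = (kry n m h0 hm ((Ypoly n m).map (MvPolynomial.eval t))).det := by
          rw [map_kry]
      _ = (kry n m h0 hm (yOf n m t)).det := by rw [map_Ypoly]
  have hDne : D ≠ 0 := by
    intro hDz
    have := hevalD (twit n m)
    rw [hDz, map_zero, kry_twit_det m h0 hm] at this
    exact zero_ne_one this
  have hgen : ∀ t : Ix n → ℂ, MvPolynomial.eval t D ≠ 0 →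
      (bigM n m (yOf n m t)).rank ≤ r := by
    intro t ht
    rw [hevalD t] at ht
    have hlb := centSupp_lb_of_indep m (yOf_mem m t) (powers_indep_of_det m h0 hm ht)
    have heq := finrank_centSupp_eq m (yOf n m t)
    rw [← hNN] at heq
    omega
  have hminor : ∀ (f : Fin (r+1) → (Ix n ⊕ Ix n ⊕ Ix n)) (g : Fin (r+1) → Ix n),
      ((bigM n m y).submatrix f g).det = 0 := by
    intro f g
    set P := ((bigM n m (Ypoly n m)).submatrix f g).det with hP
    have hevalP : ∀ t : Ix n → ℂ,
        MvPolynomial.eval t P = ((bigM n m (yOf n m t)).submatrix f g).det := by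
      intro t
      rw [hP]
      calc (MvPolynomial.eval t) ((bigM n m (Ypoly n m)).submatrix f g).det
          = (((bigM n m (Ypoly n m)).submatrix f g).map (MvPolynomial.eval t)).det :=
            RingHom.map_det _ _
        _ = (((bigM n m (Ypoly n m)).map (MvPolynomial.eval t)).submatrix f g).det := by
            rw [Matrix.submatrix_map]
        _ = ((bigM n m (yOf n m t)).submatrix f g).det := by rw [map_bigM]
    have hPD : P * D = 0 := by
      apply MvPolynomial.funext
      intro t
      rw [_root_.map_mul, map_zero]
      by_cases ht : MvPolynomial.eval t D = 0
      · rw [ht, mul_zero]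
      · rw [hevalP t]
        have hrk := hgen t ht
        have : ((bigM n m (yOf n m t)).submatrix f g).det = 0 := by
          by_contra hdz
          have hunit : IsUnit ((bigM n m (yOf n m t)).submatrix f g) :=
            (Matrix.isUnit_iff_isUnit_det _).2 (isUnit_iff_ne_zero.2 hdz)
          have h1 := Matrix.rank_of_isUnit _ hunit
          have h2 := rank_submatrix_le'' (bigM n m (yOf n m t)) f g
          rw [h1] at h2
          simp only [Fintype.card_fin] at h2
          omega
        rw [this, zero_mul]
    have hP0 : P = 0 := by
      rcases mul_eq_zero.1 hPD with h | h
      · exact h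
      · exact absurd h hDne
    have := hevalP (fun p => y p.1 p.2 / 2)
    rw [hP0, map_zero, yOf_self m hy] at this
    exact this.symm
  have hrank : (bigM n m y).rank ≤ r := rank_le_of_minors _ r hminor
  have heq := finrank_centSupp_eq m y
  rw [← hNN] at heq
  omega

/-! ### Upper bound machinery -/

lemma trace_mul_expand (A B : Matrix (Fin n) (Fin n) ℂ) :
    Matrix.trace (A * B) = ∑ i, ∑ j, A i j * B j i := by
  simp [Matrix.trace, Matrix.mul_apply, Matrix.diag]

lemma trace_mul_sBasis (C : Matrix (Fin n) (Fin n) ℂ) (a b : Fin n) :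
    Matrix.trace (C * (Matrix.single a b 1 - Matrix.single b a 1)) = C b a - C a b := by
  rw [mul_sub, Matrix.trace_sub]
  congr 1 <;>
  · rw [trace_mul_expand]
    simp only [Matrix.single, Matrix.of_apply, mul_ite, mul_one, mul_zero, ite_and,
      Finset.sum_ite_irrel, Finset.sum_ite_eq, Finset.sum_ite_eq', Finset.sum_const_zero,
      Finset.mem_univ, if_true]

lemma skew_nondeg {m : ℕ} {C : Matrix (Fin n) (Fin n) ℂ} (hC : C ∈ skewSupp n m)
    (h : ∀ W ∈ skewSupp n m, Matrix.trace (C * W) = 0) : C = 0 := by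
  obtain ⟨hCs, hCsupp⟩ := hC
  ext i j
  rw [Matrix.zero_apply]
  rcases lt_trichotomy (i:ℕ) (j:ℕ) with hij | hij | hij
  · by_cases hjm : (j:ℕ) < m
    · have := h _ (sBasis_mem m ⟨(i,j), hij, hjm⟩)
      rw [show sBasis n m ⟨(i,j), hij, hjm⟩
          = Matrix.single i j 1 - Matrix.single j i 1 from rfl] at this
      have h2 := skew_apply hCs i j
      rw [trace_mul_sBasis] at this
      linear_combination - this / 2 + h2 / 2
    · exact hCsupp i j (Or.inr (by omega))
  · have : i = j := Fin.ext hij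
    subst this
    exact skew_diag hCs i
  · by_cases him : (i:ℕ) < m
    · have := h _ (sBasis_mem m ⟨(j,i), hij, him⟩)
      rw [show sBasis n m ⟨(j,i), hij, him⟩
          = Matrix.single j i 1 - Matrix.single i j 1 from rfl] at this
      have h2 := skew_apply hCs j i
      rw [trace_mul_sBasis] at this
      linear_combination this / 2 + h2 / 2
    · exact hCsupp i j (Or.inl (by omega))

/-- The trace pairing, as a map to the dual. -/
def traceForm (m : ℕ) : ↥(skewSupp n m) →ₗ[ℂ] Module.Dual ℂ ↥(skewSupp n m) where
  toFun Z :=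
    { toFun := fun W => Matrix.trace ((Z : Matrix (Fin n) (Fin n) ℂ) * (W : Matrix (Fin n) (Fin n) ℂ))
      map_add' := by
        intro a b
        simp [Submodule.coe_add, mul_add]
      map_smul' := by
        intro c a
        simp [Submodule.coe_smul, Matrix.mul_smul] }
  map_add' := by
    intro a b
    ext W
    simp [Submodule.coe_add, add_mul]
  map_smul' := by
    intro c a
    ext W
    simp [Submodule.coe_smul, Matrix.smul_mul]

lemma traceForm_surjective (m : ℕ) : Function.Surjective (traceForm (n := n) m) := by
  have hinj : Function.Injective (traceForm (n := n) m) := by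
    rw [injective_iff_map_eq_zero]
    intro Z hZ
    have : (Z : Matrix (Fin n) (Fin n) ℂ) = 0 := by
      apply skew_nondeg Z.2
      intro W hW
      exact congrArg (fun f => f ⟨W, hW⟩) hZ
    exact Subtype.ext this
  exact (LinearMap.injective_iff_surjective_of_finrank_eq_finrank
    (Subspace.dual_finrank_eq).symm).1 hinj

def maskM (n m : ℕ) (C : Matrix (Fin n) (Fin n) ℂ) : Matrix (Fin n) (Fin n) ℂ :=
  Matrix.of fun i j => if (i:ℕ) < m ∧ (j:ℕ) < m then C i j else 0

def adMask (n m : ℕ) (x : Matrix (Fin n) (Fin n) ℂ) :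
    Matrix (Fin n) (Fin n) ℂ →ₗ[ℂ] Matrix (Fin n) (Fin n) ℂ where
  toFun W := maskM n m (x * W - W * x)
  map_add' a b := by
    ext i j
    simp only [maskM, Matrix.of_apply, mul_add, add_mul, Matrix.add_apply, Matrix.sub_apply]
    split_ifs <;> ring
  map_smul' c a := by
    ext i j
    simp only [maskM, Matrix.of_apply, Matrix.mul_smul, Matrix.smul_mul, Matrix.smul_apply,
      Matrix.sub_apply, smul_eq_mul, RingHom.id_apply]
    split_ifs <;> ring

lemma adMask_mem (m : ℕ) {x : Matrix (Fin n) (Fin n) ℂ} (hx : xᵀ = -x)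
    {W : Matrix (Fin n) (Fin n) ℂ} (hW : W ∈ skewSupp n n) :
    adMask n m x W ∈ skewSupp n m := by
  constructor
  · ext i j
    simp only [adMask, LinearMap.coe_mk, AddHom.coe_mk, maskM, Matrix.of_apply,
      Matrix.transpose_apply, Matrix.neg_apply]
    have : ((j:ℕ) < m ∧ (i:ℕ) < m) ↔ ((i:ℕ) < m ∧ (j:ℕ) < m) := and_comm
    rw [if_congr this rfl rfl]
    split_ifs with h
    · simp only [Matrix.sub_apply, Matrix.mul_apply]
      rw [← Finset.sum_sub_distrib, ← Finset.sum_sub_distrib, ← Finset.sum_neg_distrib]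
      apply Finset.sum_congr rfl
      intro c _
      rw [skew_apply hx j c, skew_apply hW.1 j c, skew_apply hx c i, skew_apply hW.1 c i]
      ring
    · ring
  · intro i j h
    simp only [adMask, LinearMap.coe_mk, AddHom.coe_mk, maskM, Matrix.of_apply]
    rw [if_neg (by omega)]

lemma trace_maskM {m : ℕ} {Z : Matrix (Fin n) (Fin n) ℂ}
    (hZ : ∀ i j : Fin n, (m ≤ (i:ℕ) ∨ m ≤ (j:ℕ)) → Z i j = 0)
    (C : Matrix (Fin n) (Fin n) ℂ) :
    Matrix.trace (Z * maskM n m C) = Matrix.trace (Z * C) := by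
  rw [trace_mul_expand, trace_mul_expand]
  apply Finset.sum_congr rfl
  intro i _
  apply Finset.sum_congr rfl
  intro j _
  by_cases h : (j:ℕ) < m ∧ (i:ℕ) < m
  · simp only [maskM, Matrix.of_apply, if_pos h]
  · rw [hZ i j (by omega), zero_mul, zero_mul]

/-- The key surjectivity: if no nonzero element of `skewSupp n m` commutes with `x`,
then `adMask n m x` maps skew matrices onto `skewSupp n m`. -/
lemma adMask_surjective (m : ℕ) {x : Matrix (Fin n) (Fin n) ℂ} (hx : xᵀ = -x)
    (hker : ∀ Z ∈ skewSupp n m, Z * x = x * Z → Z = 0) :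
    Function.Surjective ((adMask n m x).restrict
      (p := skewSupp n n) (q := skewSupp n m) (fun W hW => adMask_mem m hx hW)) := by
  set α := (adMask n m x).restrict
      (p := skewSupp n n) (q := skewSupp n m) (fun W hW => adMask_mem m hx hW) with hα
  rw [← LinearMap.range_eq_top]
  by_contra hne
  obtain ⟨f, hf0, hfmap⟩ :=
    Submodule.exists_dual_map_eq_bot_of_lt_top (lt_top_iff_ne_top.2 hne) inferInstance
  obtain ⟨Z₀, hZ₀⟩ := traceForm_surjective m f
  have hZ₀ne : (Z₀ : Matrix (Fin n) (Fin n) ℂ) ≠ 0 := by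
    intro h
    apply hf0
    rw [← hZ₀, show Z₀ = 0 from Subtype.ext h, map_zero]
  have hvanish : ∀ W : ↥(skewSupp n n), f (α W) = 0 := by
    intro W
    have h1 : f (α W) ∈ (LinearMap.range α).map f :=
      Submodule.mem_map_of_mem (LinearMap.mem_range_self α W)
    rw [hfmap] at h1
    exact (Submodule.mem_bot ℂ).1 h1
  set C : Matrix (Fin n) (Fin n) ℂ := (Z₀ : Matrix (Fin n) (Fin n) ℂ) * x
      - x * (Z₀ : Matrix (Fin n) (Fin n) ℂ) with hCdef
  have hCskew : C ∈ skewSupp n n := by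
    refine ⟨?_, fun i j h => absurd h (by have h1 := i.isLt; have h2 := j.isLt; omega)⟩
    ext i j
    simp only [hCdef, Matrix.transpose_apply, Matrix.neg_apply, Matrix.sub_apply,
      Matrix.mul_apply]
    rw [← Finset.sum_sub_distrib, ← Finset.sum_sub_distrib, ← Finset.sum_neg_distrib]
    apply Finset.sum_congr rfl
    intro c _
    rw [skew_apply Z₀.2.1 j c, skew_apply hx j c, skew_apply Z₀.2.1 c i, skew_apply hx c i]
    ring
  have hCzero : C = 0 := by
    apply skew_nondeg hCskew
    intro W hW
    have h2 := hvanish ⟨W, hW⟩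
    rw [← hZ₀] at h2
    have h3 : Matrix.trace ((Z₀ : Matrix (Fin n) (Fin n) ℂ)
        * (maskM n m (x * W - W * x))) = 0 := h2
    rw [trace_maskM Z₀.2.2] at h3
    rw [mul_sub, Matrix.trace_sub] at h3
    rw [hCdef, sub_mul, Matrix.trace_sub]
    have h4 : Matrix.trace ((Z₀ : Matrix (Fin n) (Fin n) ℂ) * (W * x))
        = Matrix.trace (x * (Z₀ : Matrix (Fin n) (Fin n) ℂ) * W) := by
      rw [← mul_assoc]
      exact Matrix.trace_mul_cycle _ _ _
    rw [h4] at h3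
    rw [← mul_assoc] at h3
    linear_combination h3
  have : (Z₀ : Matrix (Fin n) (Fin n) ℂ) = 0 :=
    hker _ Z₀.2 (by rw [← sub_eq_zero]; exact hCzero)
  exact hZ₀ne this

lemma skewSupp_mono {m m' : ℕ} (h : m ≤ m') : skewSupp n m ≤ skewSupp n m' :=
  fun _ hZ => ⟨hZ.1, fun i j hij => hZ.2 i j (by omega)⟩

end


end SO6

set_option maxHeartbeats 2000000 in
set_option synthInstance.maxHeartbeats 400000 in
open SO6 in
/-- For `g = so(n, ℂ)` (skew-symmetric matrices) and `k = so(n-1, ℂ)` (those with last row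
and column zero), if `x ∈ g` satisfies `z_k(x_k) ∩ z_g(x) = 0` — where `x_k` is the
orthogonal projection of `x` to `k` — then `x` is regular in `g` and `x_k` is regular in
`k`: `dim z_g(x) = ⌊n/2⌋` and `dim z_k(x_k) = ⌊(n-1)/2⌋`. -/
theorem stmt6 (n : ℕ) (hn : 3 ≤ n)
    (x : Matrix (Fin n) (Fin n) ℂ) (hx : xᵀ = -x)
    (last : Fin n) (hlast : (last : ℕ) = n - 1)
    (xk : Matrix (Fin n) (Fin n) ℂ)
    (hxk : ∀ i j, xk i j = if i = last ∨ j = last then 0 else x i j)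
    (hzero : ∀ Z : Matrix (Fin n) (Fin n) ℂ,
      Zᵀ = -Z → (∀ i, Z i last = 0 ∧ Z last i = 0) →
      Z * xk = xk * Z → Z * x = x * Z → Z = 0) :
    Module.finrank ℂ (Submodule.span ℂ
        {Z : Matrix (Fin n) (Fin n) ℂ | Zᵀ = -Z ∧ Z * x = x * Z}) = n / 2
    ∧ Module.finrank ℂ (Submodule.span ℂ
        {Z : Matrix (Fin n) (Fin n) ℂ |
          Zᵀ = -Z ∧ (∀ i, Z i last = 0 ∧ Z last i = 0) ∧ Z * xk = xk * Z})
      = (n - 1) / 2 := by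
  classical
  -- `xk` is skew and supported in the top-left block
  have hxk_skew : xk ∈ skewSupp n (n-1) := by
    constructor
    · ext i j
      rw [Matrix.transpose_apply, Matrix.neg_apply, hxk i j, hxk j i]
      by_cases h : i = last ∨ j = last
      · rw [if_pos (Or.symm h), if_pos h, neg_zero]
      · rw [if_neg (fun hc => h (Or.symm hc)), if_neg h]
        exact skew_apply hx i j
    · intro i j h
      rw [hxk i j, if_pos]
      rcases h with h | h
      · exact Or.inl (Fin.ext (by have := i.isLt; omega))
      · exact Or.inr (Fin.ext (by have := j.isLt; omega))
  have hxG : x ∈ skewSupp n n :=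
    ⟨hx, fun i j hij => absurd hij (by have := i.isLt; have := j.isLt; omega)⟩
  -- identify the two sets with the submodules
  have hset1 : {Z : Matrix (Fin n) (Fin n) ℂ | Zᵀ = -Z ∧ Z * x = x * Z}
      = ↑(centSupp n n x) := by
    ext Z
    simp only [Set.mem_setOf_eq, SetLike.mem_coe, mem_centSupp]
    constructor
    · rintro ⟨h1, h2⟩
      exact ⟨⟨h1, fun i j hij => absurd hij (by have := i.isLt; have := j.isLt; omega)⟩, h2⟩
    · rintro ⟨⟨h1, _⟩, h2⟩
      exact ⟨h1, h2⟩
  have hset2 : {Z : Matrix (Fin n) (Fin n) ℂ |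
      Zᵀ = -Z ∧ (∀ i, Z i last = 0 ∧ Z last i = 0) ∧ Z * xk = xk * Z}
      = ↑(centSupp n (n-1) xk) := by
    ext Z
    simp only [Set.mem_setOf_eq, SetLike.mem_coe, mem_centSupp]
    constructor
    · rintro ⟨h1, h2, h3⟩
      refine ⟨⟨h1, ?_⟩, h3⟩
      intro i j hij
      rcases hij with hij | hij
      · rw [show i = last from Fin.ext (by have := i.isLt; omega)]
        exact (h2 j).2
      · rw [show j = last from Fin.ext (by have := j.isLt; omega)]
        exact (h2 i).1
    · rintro ⟨⟨h1, hsupp⟩, h3⟩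
      exact ⟨h1, fun i => ⟨hsupp i last (Or.inr (by omega)),
        hsupp last i (Or.inl (by omega))⟩, h3⟩
  rw [hset1, hset2, Submodule.span_eq, Submodule.span_eq]
  -- lower bounds
  have hlb1 : n / 2 ≤ Module.finrank ℂ (centSupp n n x) := core n le_rfl hxG
  have hlb2 : (n-1) / 2 ≤ Module.finrank ℂ (centSupp n (n-1) xk) :=
    core (n-1) (by omega) hxk_skew
  -- transfer of commutation from `x` to `xk` for supported matrices
  have htransfer : ∀ Z : Matrix (Fin n) (Fin n) ℂ,
      (∀ i j : Fin n, ((n-1) ≤ (i:ℕ) ∨ (n-1) ≤ (j:ℕ)) → Z i j = 0) →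
      Z * x = x * Z → Z * xk = xk * Z := by
    intro Z hsupp hcomm
    ext i j
    by_cases hi : i = last
    · rw [hi]
      rw [Matrix.mul_apply, Matrix.mul_apply]
      rw [Finset.sum_eq_zero, Finset.sum_eq_zero]
      · intro c _
        rw [hxk last c, if_pos (Or.inl rfl), zero_mul]
      · intro c _
        rw [hsupp last c (Or.inl (by omega)), zero_mul]
    · by_cases hj : j = last
      · rw [hj]
        rw [Matrix.mul_apply, Matrix.mul_apply]
        rw [Finset.sum_eq_zero, Finset.sum_eq_zero]
        · intro c _
          rw [hsupp c last (Or.inr (by omega)), mul_zero]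
        · intro c _
          rw [hxk c last, if_pos (Or.inr rfl), mul_zero]
      · have e1 : (Z * xk) i j = (Z * x) i j := by
          rw [Matrix.mul_apply, Matrix.mul_apply]
          apply Finset.sum_congr rfl
          intro c _
          by_cases hc : c = last
          · rw [hc, hsupp i last (Or.inr (by omega)), zero_mul, zero_mul]
          · rw [hxk c j, if_neg (by tauto)]
        have e2 : (xk * Z) i j = (x * Z) i j := by
          rw [Matrix.mul_apply, Matrix.mul_apply]
          apply Finset.sum_congr rfl
          intro c _
          by_cases hc : c = last
          · rw [hc, hsupp last j (Or.inl (by omega)), mul_zero, mul_zero]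
          · rw [hxk i c, if_neg (by tauto)]
        rw [e1, e2, hcomm]
  -- kernel condition for surjectivity
  have hker : ∀ Z ∈ skewSupp n (n-1), Z * x = x * Z → Z = 0 := by
    intro Z hZ hcomm
    exact hzero Z hZ.1
      (fun i => ⟨hZ.2 i last (Or.inr (by omega)), hZ.2 last i (Or.inl (by omega))⟩)
      (htransfer Z hZ.2 hcomm) hcomm
  set α := (adMask n (n-1) x).restrict
      (p := skewSupp n n) (q := skewSupp n (n-1))
      (fun W hW => adMask_mem (n-1) hx hW) with hαdef
  have hαsurj : Function.Surjective α := adMask_surjective (n-1) hx hker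
  have hrn := LinearMap.finrank_range_add_finrank_ker α
  have hrange : Module.finrank ℂ (LinearMap.range α)
      = Module.finrank ℂ (skewSupp n (n-1)) := by
    rw [LinearMap.range_eq_top.2 hαsurj]
    exact finrank_top ℂ _
  have hZgle : centSupp n n x ≤ skewSupp n n := inf_le_left
  have hZkle : centSupp n (n-1) xk ≤ skewSupp n n :=
    le_trans inf_le_left (skewSupp_mono (by omega))
  set Zg' := (centSupp n n x).comap (skewSupp n n).subtype with hZg'
  set Zk' := (centSupp n (n-1) xk).comap (skewSupp n n).subtype with hZk'
  have hfg : Module.finrank ℂ Zg' = Module.finrank ℂ (centSupp n n x) :=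
    (Submodule.comapSubtypeEquivOfLe hZgle).finrank_eq
  have hfk : Module.finrank ℂ Zk' = Module.finrank ℂ (centSupp n (n-1) xk) :=
    (Submodule.comapSubtypeEquivOfLe hZkle).finrank_eq
  have hinf : Zg' ⊓ Zk' = ⊥ := by
    rw [eq_bot_iff]
    rintro ⟨Z, hZG⟩ ⟨h1, h2⟩
    have h1' : Z ∈ centSupp n n x := h1
    have h2' : Z ∈ centSupp n (n-1) xk := h2
    have hZ0 : Z = 0 := hzero Z h1'.1.1
      (fun i => ⟨h2'.1.2 i last (Or.inr (by omega)), h2'.1.2 last i (Or.inl (by omega))⟩)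
      h2'.2 h1'.2
    exact (Submodule.mem_bot ℂ).2 (Subtype.ext hZ0)
  have hsup : Zg' ⊔ Zk' ≤ LinearMap.ker α := by
    apply sup_le
    · rintro ⟨Z, hZG⟩ h1
      have h1' : Z ∈ centSupp n n x := h1
      rw [LinearMap.mem_ker]
      apply Subtype.ext
      show adMask n (n-1) x Z = 0
      show maskM n (n-1) (x * Z - Z * x) = 0
      rw [show x * Z - Z * x = 0 from by rw [← h1'.2]; exact sub_self _]
      ext i j
      simp [maskM]
    · rintro ⟨Z, hZG⟩ h2
      have h2' : Z ∈ centSupp n (n-1) xk := h2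
      rw [LinearMap.mem_ker]
      apply Subtype.ext
      show adMask n (n-1) x Z = 0
      show maskM n (n-1) (x * Z - Z * x) = 0
      ext i j
      simp only [maskM, Matrix.of_apply, Matrix.zero_apply]
      split_ifs with hcond
      · have e1 : (x * Z) i j = (xk * Z) i j := by
          rw [Matrix.mul_apply, Matrix.mul_apply]
          apply Finset.sum_congr rfl
          intro c _
          by_cases hc : c = last
          · rw [hc, h2'.1.2 last j (Or.inl (by omega)), mul_zero, mul_zero]
          · rw [hxk i c, if_neg]
            rintro (h | h)
            · exact absurd (congrArg Fin.val h) (by omega)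
            · exact hc h
        have e2 : (Z * x) i j = (Z * xk) i j := by
          rw [Matrix.mul_apply, Matrix.mul_apply]
          apply Finset.sum_congr rfl
          intro c _
          by_cases hc : c = last
          · rw [hc, h2'.1.2 i last (Or.inr (by omega)), zero_mul, zero_mul]
          · rw [hxk c j, if_neg]
            rintro (h | h)
            · exact hc h
            · exact absurd (congrArg Fin.val h) (by omega)
        rw [Matrix.sub_apply, e1, e2, ← h2'.2, sub_self]
      · rfl
  have hcount := Submodule.finrank_sup_add_finrank_inf_eq Zg' Zk'
  rw [hinf, finrank_bot, add_zero, hfg, hfk] at hcount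
  have hle : Module.finrank ℂ ↥(Zg' ⊔ Zk') ≤ Module.finrank ℂ (LinearMap.ker α) :=
    Submodule.finrank_mono hsup
  have hdG := twice_finrank_skewSupp (n := n) n le_rfl
  have hdK := twice_finrank_skewSupp (n := n) (n-1) (by omega)
  have harith : n * (n-1) = (n-1) * ((n-1) - 1) + 2 * (n-1) := by
    obtain ⟨p, rfl⟩ : ∃ p, n = p + 3 := ⟨n - 3, by omega⟩
    simp only [show p + 3 - 1 = p + 2 from by omega, show p + 2 - 1 = p + 1 from by omega]
    ring
  have hstep : 2 * Module.finrank ℂ (skewSupp n n)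
      = 2 * Module.finrank ℂ (skewSupp n (n-1)) + 2 * (n-1) := by
    rw [hdG, hdK, harith]
  refine ⟨?_, ?_⟩ <;> omega
end

section
/- Let g = so(n, ℂ) and k = so(n−1, ℂ) = g^θ. If x ∈ g satisfies σ(x_k) ∩ σ(x) = ∅ (disjoint spectra in the sense below), then z_k(x) = 0, i.e. no nonzero element of k commutes with x. -/
open Matrix

/-- The spectrum of `y ∈ so(m, ℂ)` in the sense of the paper: all eigenvalues, except that
for `m` odd the forced eigenvalue `0` is only counted if its algebraic multiplicity
is strictly greater than one. -/
def specSo (m : ℕ) (y : Matrix (Fin m) (Fin m) ℂ) : Set ℂ :=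
  {μ | μ ∈ spectrum ℂ y ∧ (μ = 0 → Odd m → 1 < (Matrix.charpoly y).rootMultiplicity 0)}

open Polynomial in
lemma aux_sum_split {M : Type*} [AddCommMonoid M] {n : ℕ} (hn : 1 ≤ n) (g : Fin n → M) :
    ∑ j, g j = (∑ j : Fin (n-1), g ⟨j.1, by omega⟩) + g ⟨n-1, by omega⟩ := by
  have he : n - 1 + 1 = n := by omega
  rw [← Fintype.sum_equiv (finCongr he) (fun j => g (finCongr he j)) g (fun j => rfl)]
  rw [Fin.sum_univ_castSucc]
  have h2 : (finCongr he) (Fin.last (n-1)) = (⟨n-1, by omega⟩ : Fin n) := Fin.ext (by simp)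
  rw [h2]
  congr 1

lemma mem_spectrum_of_mulVec {m : ℕ} (A : Matrix (Fin m) (Fin m) ℂ) {v : Fin m → ℂ} {μ : ℂ}
    (hv : v ≠ 0) (h : A.mulVec v = μ • v) : μ ∈ spectrum ℂ A := by
  rw [← AlgEquiv.spectrum_eq (Matrix.toLinAlgEquiv' (R := ℂ) (n := Fin m)) A,
    ← Module.End.hasEigenvalue_iff_mem_spectrum]
  exact Module.End.hasEigenvalue_of_hasEigenvector
    ⟨Module.End.mem_eigenspace_iff.mpr (by simpa using h), hv⟩

lemma charpoly_mulVecLin {m : ℕ} (A : Matrix (Fin m) (Fin m) ℂ) :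
    (Matrix.mulVecLin A).charpoly = A.charpoly := by
  rw [← Matrix.toLin'_apply' A,
    ← LinearMap.charpoly_toMatrix (Matrix.toLin' A) (Pi.basisFun ℂ (Fin m)),
    LinearMap.toMatrix_eq_toMatrix', LinearMap.toMatrix'_toLin']

open Polynomial in
/-- An endomorphism of a finite-dimensional complex vector space with no nonzero
eigenvalue is nilpotent. -/
lemma isNilpotent_of_no_nonzero_eigenvalue {V : Type*} [AddCommGroup V] [Module ℂ V]
    [FiniteDimensional ℂ V] (f : Module.End ℂ V)
    (h : ¬ ∃ μ : ℂ, μ ≠ 0 ∧ f.HasEigenvalue μ) : IsNilpotent f := by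
  have hint : IsIntegral ℂ f := Algebra.IsIntegral.isIntegral f
  set p := minpoly ℂ f with hp
  have hmon : p.Monic := minpoly.monic hint
  have hroots : ∀ μ ∈ p.roots, μ = 0 := by
    intro μ hμ
    by_contra h0
    exact h ⟨μ, h0, Module.End.hasEigenvalue_of_isRoot (isRoot_of_mem_roots hμ)⟩
  have hsplit : p.Splits := IsAlgClosed.splits p
  have hcard : p.roots.card = p.natDegree := (splits_iff_card_roots).mp hsplit
  have hrepl : p.roots = Multiset.replicate p.natDegree 0 := by
    rw [← hcard]
    exact Multiset.eq_replicate.mpr ⟨rfl, hroots⟩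
  have hpX : p = X ^ p.natDegree := by
    conv_lhs => rw [hsplit.eq_prod_roots_of_monic hmon]
    rw [hrepl, Multiset.map_replicate, Multiset.prod_replicate, map_zero, sub_zero]
  refine ⟨p.natDegree, ?_⟩
  have := minpoly.aeval ℂ f
  rw [← hp, hpX] at this
  simpa using this

/-- If `x ∈ so(n, ℂ)` and its projection `x_k ∈ so(n-1, ℂ)` have disjoint spectra (in the
sense of `specSo`), then no nonzero element of `k = so(n-1, ℂ)` commutes with `x`,
i.e. `z_k(x) = 0`. -/
theorem stmt7 (n : ℕ) (hn : 3 ≤ n)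
    (x : Matrix (Fin n) (Fin n) ℂ) (hx : xᵀ = -x)
    (last : Fin n) (hlast : (last : ℕ) = n - 1)
    (xk : Matrix (Fin (n - 1)) (Fin (n - 1)) ℂ)
    (hxk : ∀ i j : Fin (n - 1),
      xk i j = x ⟨i, by have := i.2; omega⟩ ⟨j, by have := j.2; omega⟩)
    (hdisj : specSo (n - 1) xk ∩ specSo n x = ∅) :
    ∀ Z : Matrix (Fin n) (Fin n) ℂ,
      Zᵀ = -Z → (∀ i, Z i last = 0 ∧ Z last i = 0) → Z * x = x * Z → Z = 0 := by
  intro Z hZskew hZlast hZcomm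
  by_contra hZne
  have hn1 : 1 ≤ n := by omega
  set X : Module.End ℂ (Fin n → ℂ) := Matrix.mulVecLin x with hX
  set Y : Module.End ℂ (Fin (n-1) → ℂ) := Matrix.mulVecLin xk with hY
  set emb : Fin (n-1) → Fin n := fun j => ⟨j.1, by omega⟩ with hemb
  set π : (Fin n → ℂ) →ₗ[ℂ] (Fin (n-1) → ℂ) := LinearMap.funLeft ℂ ℂ emb with hπ
  have hlast_eq : (⟨n-1, by omega⟩ : Fin n) = last := Fin.ext (by simp [hlast])
  have hne_lt : ∀ i : Fin n, i ≠ last → (i : ℕ) < n - 1 := by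
    intro i hi
    have h1 : (i : ℕ) < n := i.2
    rcases Nat.lt_or_ge (i : ℕ) (n-1) with h | h
    · exact h
    · exact absurd (Fin.ext (by omega : (i : ℕ) = (last : ℕ))) hi
  -- the key commuting computation
  have hcomm1 : ∀ v : Fin n → ℂ, v last = 0 → π (X v) = Y (π v) := by
    intro v hv
    funext j
    have : π (X v) j = ∑ i : Fin n, x (emb j) i * v i := by
      simp [hπ, hX, Matrix.mulVecLin_apply, Matrix.mulVec, dotProduct,
        LinearMap.funLeft_apply]
    rw [this, aux_sum_split hn1 (fun i => x (emb j) i * v i)]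
    rw [hlast_eq, hv, mul_zero, add_zero]
    simp only [hY, hπ, Matrix.mulVecLin_apply, Matrix.mulVec, dotProduct,
      LinearMap.funLeft_apply]
    refine Finset.sum_congr rfl fun i _ => ?_
    rw [hxk j i]
  set U : Submodule ℂ (Fin n → ℂ) := LinearMap.range (Matrix.mulVecLin Z) with hU
  have hmemlast : ∀ v ∈ U, v last = 0 := by
    rintro _ ⟨u, rfl⟩
    simp only [Matrix.mulVecLin_apply, Matrix.mulVec, dotProduct]
    exact Finset.sum_eq_zero fun j _ => by rw [(hZlast j).2, zero_mul]
  have hUinv : ∀ v ∈ U, X v ∈ U := by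
    rintro _ ⟨u, rfl⟩
    refine ⟨x.mulVec u, ?_⟩
    simp only [Matrix.mulVecLin_apply, hX, Matrix.mulVec_mulVec, hZcomm]
  have hpowU : ∀ (j : ℕ), ∀ v ∈ U, (X ^ j) v ∈ U := by
    intro j
    induction j with
    | zero => intro v hv; simpa using hv
    | succ j ih =>
      intro v hv
      rw [pow_succ, Module.End.mul_apply]
      exact ih _ (hUinv v hv)
  have hcommk : ∀ (k : ℕ), ∀ v ∈ U, π ((X ^ k) v) = (Y ^ k) (π v) := by
    intro k
    induction k with
    | zero => intro v hv; simp
    | succ k ih =>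
      intro v hv
      rw [pow_succ, pow_succ, Module.End.mul_apply, Module.End.mul_apply,
        ih _ (hUinv v hv), hcomm1 v (hmemlast v hv)]
  have hπinj : ∀ v ∈ U, π v = 0 → v = 0 := by
    intro v hv h0
    funext i
    by_cases hi : i = last
    · rw [hi]; exact hmemlast v hv
    · have hlt := hne_lt i hi
      have := congrFun h0 ⟨i.1, hlt⟩
      simpa [hπ, LinearMap.funLeft_apply, hemb] using this
  -- skewness entries
  have hskew : ∀ i j, Z j i = -Z i j := by
    intro i j
    have := congrFun (congrFun hZskew i) j
    simpa [Matrix.transpose_apply, Matrix.neg_apply] using this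
  have hdiag : ∀ i, Z i i = 0 := by
    intro i
    have h := hskew i i
    linear_combination h / 2
  obtain ⟨a, c, hac⟩ : ∃ a c, Z a c ≠ 0 := by
    by_contra h
    push_neg at h
    exact hZne (by ext i j; simp [h])
  have hUnebot : U ≠ ⊥ := by
    rw [Submodule.ne_bot_iff]
    refine ⟨Z.mulVec (Pi.single c 1), ⟨Pi.single c 1, rfl⟩, ?_⟩
    intro h
    apply hac
    have := congrFun h a
    rw [Matrix.mulVec_single] at this
    simpa using this
  have hrank2 : 2 ≤ Module.finrank ℂ U := by
    rcases Nat.lt_or_ge (Module.finrank ℂ U) 2 with h | h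
    · exfalso
      interval_cases hfr : Module.finrank ℂ U
      · exact hUnebot (Submodule.finrank_eq_zero.mp hfr)
      · set w : Fin n → ℂ := Z.mulVec (Pi.single c 1) with hw
        have hwU : w ∈ U := ⟨Pi.single c 1, rfl⟩
        have hw0 : w ≠ 0 := by
          intro h
          apply hac
          have := congrFun h a
          rw [hw, Matrix.mulVec_single] at this
          simpa using this
        have hspan : Submodule.span ℂ {w} = U := by
          apply Submodule.eq_of_le_of_finrank_le
          · rwa [Submodule.span_singleton_le_iff_mem]
          · rw [hfr, finrank_span_singleton hw0]
        have hcols : ∀ j, ∃ t : ℂ, Z.mulVec (Pi.single j 1) = t • w := by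
          intro j
          have : Z.mulVec (Pi.single j 1) ∈ Submodule.span ℂ {w} :=
            hspan ▸ ⟨Pi.single j 1, rfl⟩
          rw [Submodule.mem_span_singleton] at this
          obtain ⟨t, ht⟩ := this
          exact ⟨t, ht.symm⟩
        have hrowc : ∀ j, Z c j = 0 := by
          intro j
          obtain ⟨t, ht⟩ := hcols j
          have h1 := congrFun ht c
          rw [Matrix.mulVec_single] at h1
          replace h1 : Z c j = (t • w) c := by rw [← h1]; simp
          have h2 : w c = 0 := by
            rw [hw, Matrix.mulVec_single]
            simpa using hdiag c
          rw [h1, Pi.smul_apply, h2, smul_eq_mul, mul_zero]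
        have := hrowc a
        rw [hskew a c] at this
        exact hac (by simpa using this)
    · exact h
  -- the restriction of X to U
  set f : Module.End ℂ U := X.restrict hUinv with hf
  -- produce an eigenvector of x lying in U, together with multiplicity info when μ = 0
  obtain ⟨μ, v, hvU, hv0, hXv, hmult⟩ :
      ∃ (μ : ℂ) (v : Fin n → ℂ), v ∈ U ∧ v ≠ 0 ∧ x.mulVec v = μ • v ∧
        (μ = 0 → 1 < (Matrix.charpoly xk).rootMultiplicity 0 ∧
          1 < (Matrix.charpoly x).rootMultiplicity 0) := by
    by_cases hev : ∃ μ : ℂ, μ ≠ 0 ∧ f.HasEigenvalue μ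
    · obtain ⟨μ, hμ0, hμ⟩ := hev
      obtain ⟨⟨v, hvU⟩, hveig⟩ := hμ.exists_hasEigenvector
      have hv0 : v ≠ 0 := fun h => hveig.2 (by simp [h])
      have hXv : x.mulVec v = μ • v := by
        have h1 := Module.End.mem_eigenspace_iff.mp hveig.1
        have h2 := congrArg Subtype.val h1
        simpa [hf, LinearMap.restrict_apply, hX, Matrix.mulVecLin_apply] using h2
      exact ⟨μ, v, hvU, hv0, hXv, fun h0 => absurd h0 hμ0⟩
    · -- f is nilpotent
      have hnil : IsNilpotent f := isNilpotent_of_no_nonzero_eigenvalue f hev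
      obtain ⟨d, hd⟩ := hnil
      have hXd : ∀ v ∈ U, (X ^ d) v = 0 := by
        intro v hv
        have h1 : (f ^ d) ⟨v, hv⟩ = 0 := by rw [hd]; rfl
        rw [hf, Module.End.pow_restrict] at h1
        have := congrArg Subtype.val h1
        simpa [LinearMap.restrict_apply] using this
      -- multiplicity for x
      have hUle : U ≤ (X.maxGenEigenspace 0) := by
        intro v hv
        rw [Module.End.mem_maxGenEigenspace]
        exact ⟨d, by simpa using hXd v hv⟩
      have hmultx : 1 < (Matrix.charpoly x).rootMultiplicity 0 := by
        have h1 := Submodule.finrank_mono hUle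
        rw [LinearMap.finrank_maxGenEigenspace_zero_eq, hX] at h1
        rw [Polynomial.rootMultiplicity_eq_natTrailingDegree', ← _root_.charpoly_mulVecLin x]
        omega
      -- multiplicity for xk
      set Ubar : Submodule ℂ (Fin (n-1) → ℂ) := U.map π with hUbar
      have hUbarle : Ubar ≤ (Y.maxGenEigenspace 0) := by
        rintro _ ⟨v, hv, rfl⟩
        rw [Module.End.mem_maxGenEigenspace]
        refine ⟨d, ?_⟩
        have h1 := hcommk d v hv
        rw [hXd v hv, map_zero] at h1
        simpa [zero_smul, sub_zero] using h1.symm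
      have hfrUbar : Module.finrank ℂ Ubar = Module.finrank ℂ U := by
        have hinj : Function.Injective (π.comp U.subtype) := by
          rw [← LinearMap.ker_eq_bot]
          rw [Submodule.eq_bot_iff]
          rintro ⟨v, hv⟩ hker
          rw [LinearMap.mem_ker, LinearMap.comp_apply] at hker
          exact Subtype.ext (hπinj v hv hker)
        have hrange : LinearMap.range (π.comp U.subtype) = Ubar := by
          rw [LinearMap.range_comp, Submodule.range_subtype]
        rw [← hrange]
        exact LinearMap.finrank_range_of_inj hinj
      have hmultxk : 1 < (Matrix.charpoly xk).rootMultiplicity 0 := by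
        have h1 := Submodule.finrank_mono hUbarle
        rw [LinearMap.finrank_maxGenEigenspace_zero_eq, hY] at h1
        rw [Polynomial.rootMultiplicity_eq_natTrailingDegree', ← _root_.charpoly_mulVecLin xk]
        omega
      -- produce an eigenvector for the eigenvalue 0
      obtain ⟨v0, hv0U, hv00⟩ := Submodule.ne_bot_iff U |>.mp hUnebot
      have hexk : ∃ k, (X ^ k) v0 = 0 := ⟨d, hXd v0 hv0U⟩
      set k := Nat.find hexk with hk
      have hkspec : (X ^ k) v0 = 0 := Nat.find_spec hexk
      have hkpos : k ≠ 0 := by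
        intro h0
        rw [h0] at hkspec
        simp at hkspec
        exact hv00 hkspec
      set v : Fin n → ℂ := (X ^ (k-1)) v0 with hv
      have hvne : v ≠ 0 := Nat.find_min hexk (by omega : k - 1 < k)
      have hvU : v ∈ U := hpowU (k-1) v0 hv0U
      have hXv : x.mulVec v = (0 : ℂ) • v := by
        have : X v = (X ^ k) v0 := by
          have he : k - 1 + 1 = k := by omega
          rw [hv, ← Module.End.mul_apply, ← pow_succ', he]
        rw [zero_smul]
        simpa [hX, Matrix.mulVecLin_apply] using this.trans hkspec
      exact ⟨0, v, hvU, hvne, hXv, fun _ => ⟨hmultxk, hmultx⟩⟩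
  -- conclude
  have hsx : μ ∈ spectrum ℂ x := mem_spectrum_of_mulVec x hv0 hXv
  have hπv0 : π v ≠ 0 := fun h => hv0 (hπinj v hvU h)
  have hYv : xk.mulVec (π v) = μ • (π v) := by
    have h1 : π (X v) = Y (π v) := hcomm1 v (hmemlast v hvU)
    have h2 : X v = μ • v := by simpa [hX, Matrix.mulVecLin_apply] using hXv
    rw [h2, _root_.map_smul] at h1
    simpa [hY, Matrix.mulVecLin_apply] using h1.symm
  have hsxk : μ ∈ spectrum ℂ xk := mem_spectrum_of_mulVec xk hπv0 hYv
  exact Set.eq_empty_iff_forall_notMem.mp hdisj μ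
    ⟨⟨hsxk, fun h0 _ => (hmult h0).1⟩, ⟨hsx, fun h0 _ => (hmult h0).2⟩⟩
end

section
/- Let (M, H) be a pair where M is a complex reductive group and H a reductive subgroup, such that H acts on the flag variety of M with finitely many orbits (spherical pair), and suppose dim B = dim h^⊥ − dim(h^⊥ // H), where B is the flag variety of m, h^⊥ the coisotropy representation of H, and h^⊥ // H the GIT quotient. Then every H-regular element of h^⊥ is a regular element of m; conversely, if every H-regular element of h^⊥ is M-regular in m, the dimension identity holds. -/
/-- Abstract form of Theorem 4.3: for a reductive spherical pair `(M, H)` with Lie algebras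
`(L, H)`, coisotropy representation `h^⊥ = P`, orbit dimensions `orbH x = dim h - dim z_h(x)`
and `orbM x = dim m - dim z_m(x)`, `q = dim (h^⊥ // H)` and `dB = dim B` (so `2·dB` is the
maximal adjoint orbit dimension), and granting Panyushev's facts (the codimension of the
`H`-orbit of any `H`-regular point is `q`; `2·dim(H·x) ≤ dim(M·x)` on `P`; generically
`dim(M·x) = 2·dim(H·x)`), the identity `dB = dim P - q` holds if and only if every
`H`-regular element of `h^⊥` is `M`-regular. -/
theorem stmt9 (L : Type*) [LieRing L] [LieAlgebra ℂ L] [Module.Finite ℂ L]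
    (B : LinearMap.BilinForm ℂ L)
    (hsymm : ∀ x y : L, B x y = B y x)
    (hinv : ∀ x y z : L, B ⁅x, y⁆ z = B x ⁅y, z⁆)
    (hnd : ∀ x : L, (∀ y : L, B x y = 0) → x = 0)
    (H : LieSubalgebra ℂ L)
    (P : Submodule ℂ L) (hP : ∀ x : L, x ∈ P ↔ ∀ z ∈ H, B z x = 0)
    (orbH orbM : L → ℕ)
    (horbH : ∀ x : L, orbH x = Module.finrank ℂ H -
        Module.finrank ℂ (Submodule.span ℂ {z : L | z ∈ H ∧ ⁅z, x⁆ = 0}))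
    (horbM : ∀ x : L, orbM x = Module.finrank ℂ L -
        Module.finrank ℂ (Submodule.span ℂ {z : L | ⁅z, x⁆ = 0}))
    (Hreg Mreg : L → Prop)
    (hHreg : ∀ x : L, Hreg x ↔ x ∈ P ∧ ∀ y ∈ P, orbH y ≤ orbH x)
    (hMreg : ∀ x : L, Mreg x ↔ ∀ y : L, orbM y ≤ orbM x)
    (dB q : ℕ)
    (hdBmax : ∀ y : L, orbM y ≤ 2 * dB) (hdBatt : ∃ y : L, orbM y = 2 * dB)
    (hq : ∀ x : L, Hreg x → Module.finrank ℂ P - orbH x = q)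
    (hineq : ∀ x ∈ P, 2 * orbH x ≤ orbM x)
    (hgen : ∃ x : L, Hreg x ∧ orbM x = 2 * orbH x) :
    dB = Module.finrank ℂ P - q ↔ ∀ x : L, Hreg x → Mreg x := by

  -- Key: for `x ∈ P`, the `H`-orbit dimension is at most `dim P`.
  have key : ∀ x ∈ P, orbH x ≤ Module.finrank ℂ P := by
    intro x hx
    rw [horbH x]
    set f : L →ₗ[ℂ] L :=
      { toFun := fun z => ⁅z, x⁆
        map_add' := fun a b => add_lie a b x
        map_smul' := fun c a => smul_lie c a x } with hf
    have hspan : Submodule.span ℂ {z : L | z ∈ H ∧ ⁅z, x⁆ = 0}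
        = H.toSubmodule ⊓ LinearMap.ker f := by
      apply le_antisymm
      · rw [Submodule.span_le]
        rintro z ⟨hz1, hz2⟩
        exact ⟨hz1, hz2⟩
      · intro z hz
        exact Submodule.subset_span ⟨hz.1, hz.2⟩
    rw [hspan]
    have hrank : Module.finrank ℂ (LinearMap.range (f.domRestrict H.toSubmodule))
        + Module.finrank ℂ (LinearMap.ker (f.domRestrict H.toSubmodule))
        = Module.finrank ℂ H := LinearMap.finrank_range_add_finrank_ker _
    have hker : Module.finrank ℂ (LinearMap.ker (f.domRestrict H.toSubmodule))
        = Module.finrank ℂ (H.toSubmodule ⊓ LinearMap.ker f : Submodule ℂ L) := by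
      rw [LinearMap.ker_domRestrict]
      have := Submodule.map_comap_subtype H.toSubmodule (LinearMap.ker f)
      rw [← this]
      exact (Submodule.equivMapOfInjective H.toSubmodule.subtype
        (Submodule.injective_subtype _) _).finrank_eq
    have hrange : LinearMap.range (f.domRestrict H.toSubmodule) ≤ P := by
      rintro y ⟨⟨z, hz⟩, rfl⟩
      rw [hP]
      intro w hw
      have hv : (f.domRestrict H.toSubmodule) ⟨z, hz⟩ = ⁅z, x⁆ := rfl
      rw [hv, ← hinv w z x]
      exact (hP x).1 hx ⁅w, z⁆ (H.lie_mem hw hz)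
    have hle : Module.finrank ℂ (LinearMap.range (f.domRestrict H.toSubmodule))
        ≤ Module.finrank ℂ P := Submodule.finrank_mono hrange
    omega
  obtain ⟨x₀, hx₀reg, hx₀gen⟩ := hgen
  obtain ⟨hx₀P, hx₀max⟩ := (hHreg x₀).1 hx₀reg
  have hq₀ := hq x₀ hx₀reg
  have hle₀ := key x₀ hx₀P
  have hMregiff : ∀ x, Mreg x ↔ orbM x = 2 * dB := by
    intro x
    rw [hMreg]
    constructor
    · intro h
      obtain ⟨y, hy⟩ := hdBatt
      exact le_antisymm (hdBmax x) (hy ▸ h y)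
    · intro h y
      exact h ▸ hdBmax y
  constructor
  · intro hdB x hx
    obtain ⟨hxP, hxmax⟩ := (hHreg x).1 hx
    have horb : orbH x = orbH x₀ := le_antisymm (hx₀max x hxP) (hxmax x₀ hx₀P)
    have hdB' : dB = orbH x₀ := by omega
    rw [hMregiff]
    have h1 := hineq x hxP
    have h2 := hdBmax x
    omega
  · intro hall
    have := (hMregiff x₀).1 (hall x₀ hx₀reg)
    omega
end

section
/- Let g = so(n, ℂ), K = SO(n−1, ℂ), and let x ∈ g satisfy z_k(x) = 0 (x is n-strongly regular). Then the stabilizer Z_K(x) = {g ∈ K : Ad(g)x = x} is the trivial group. -/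
open Matrix

private lemma sbm_conj {n : ℕ} (Q : Matrix (Fin n) (Fin n) ℂ) (i j a b : Fin n) :
    (Q * (Matrix.single i j 1 : Matrix (Fin n) (Fin n) ℂ) * Q) a b = Q a i * Q j b := by
  simp [mul_apply, Matrix.single, ite_and, Finset.sum_ite_eq, Finset.mul_sum]

private lemma sbm_transpose {n : ℕ} (i j : Fin n) :
    (Matrix.single i j (1:ℂ))ᵀ = Matrix.single j i 1 := by
  ext a b; simp [Matrix.single, and_comm]

/-- Let `g = so(n, ℂ)` (skew-symmetric matrices), `K = SO(n-1, ℂ) ⊆ SO(n, ℂ)` (special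
orthogonal matrices fixing the last basis vector).  If `x ∈ g` is `n`-strongly regular,
i.e. `z_k(x) = 0`, then the stabilizer `Z_K(x)` is trivial. -/
theorem stmt10 (n : ℕ) (hn : 3 ≤ n)
    (x : Matrix (Fin n) (Fin n) ℂ) (hx : xᵀ = -x)
    (last : Fin n) (hlast : (last : ℕ) = n - 1)
    (hnsreg : ∀ Z : Matrix (Fin n) (Fin n) ℂ,
      Zᵀ = -Z → (∀ i, Z i last = 0 ∧ Z last i = 0) → Z * x = x * Z → Z = 0) :
    ∀ g : Matrix (Fin n) (Fin n) ℂ,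
      gᵀ * g = 1 → g.det = 1 →
      (∀ i, g i last = (if i = last then 1 else 0) ∧
            g last i = (if i = last then 1 else 0)) →
      g * x = x * g → g = 1 := by
  intro g hg hdet hgl hgx
  -- gᵀ also commutes with x
  have hgtx : gᵀ * x = x * gᵀ := by
    have h1 : xᵀ * gᵀ = gᵀ * xᵀ := by rw [← transpose_mul, ← transpose_mul, hgx]
    rw [hx, neg_mul, mul_neg, neg_inj] at h1
    exact h1.symm
  -- g is symmetric
  have hsym : g = gᵀ := by
    have hz := hnsreg (g - gᵀ)
      (by rw [transpose_sub, transpose_transpose, neg_sub])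
      (by
        intro i
        exact ⟨by simp [Matrix.sub_apply, transpose_apply, (hgl i).1, (hgl i).2],
               by simp [Matrix.sub_apply, transpose_apply, (hgl i).1, (hgl i).2]⟩)
      (by rw [sub_mul, mul_sub, hgx, hgtx])
    exact sub_eq_zero.mp hz
  have hgg : g * g = 1 := by
    calc g * g = gᵀ * g := by rw [← hsym]
    _ = 1 := hg
  obtain ⟨Q, hQdef⟩ : ∃ Q : Matrix (Fin n) (Fin n) ℂ, Q = 1 - g := ⟨_, rfl⟩
  have hQt : Qᵀ = Q := by rw [hQdef, transpose_sub, transpose_one, ← hsym]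
  have hQx : Q * x = x * Q := by rw [hQdef, sub_mul, mul_sub, one_mul, mul_one, hgx]
  have hQlast : ∀ i, Q i last = 0 ∧ Q last i = 0 := by
    intro i
    exact ⟨by simp [hQdef, Matrix.sub_apply, one_apply, (hgl i).1],
           by simp [hQdef, Matrix.sub_apply, one_apply, (hgl i).2, eq_comm]⟩
  have hQQ : Q * Q = Q + Q := by
    have h1 : (1 - g) * (1 - g) = 1 - g - g + g * g := by noncomm_ring
    rw [hQdef, h1, hgg]
    abel
  -- Q * x = 0
  have hQx0 : Q * x = 0 := by
    have hz := hnsreg (Q * x * Q)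
      (by
        rw [transpose_mul, transpose_mul, hQt, hx]
        simp [mul_neg, neg_mul, mul_assoc])
      (by
        intro i
        constructor
        · rw [mul_apply]
          exact Finset.sum_eq_zero fun k _ => by rw [(hQlast k).1, mul_zero]
        · rw [mul_assoc, mul_apply]
          exact Finset.sum_eq_zero fun k _ => by rw [(hQlast k).2, zero_mul])
      (by
        calc Q * x * Q * x = (Q * x) * (Q * x) := by rw [mul_assoc]
          _ = (x * Q) * (x * Q) := by rw [hQx]
          _ = x * (Q * (x * Q)) := by rw [mul_assoc x Q (x * Q)]
          _ = x * (Q * x * Q) := by rw [← mul_assoc Q x Q])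
    have h2 : Q * x * Q = Q * x + Q * x := by
      calc Q * x * Q = Q * (x * Q) := by rw [mul_assoc]
        _ = Q * (Q * x) := by rw [hQx]
        _ = Q * Q * x := by rw [mul_assoc]
        _ = Q * x + Q * x := by rw [hQQ, add_mul]
    rw [hz, eq_comm, ← two_smul ℂ (Q * x), smul_eq_zero] at h2
    rcases h2 with h2 | h2
    · exact absurd h2 two_ne_zero
    · exact h2
  have hxQ0 : x * Q = 0 := by rw [← hQx, hQx0]
  have comm0 : ∀ B : Matrix (Fin n) (Fin n) ℂ, Q * B * Q * x = x * (Q * B * Q) := by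
    intro B
    rw [mul_assoc (Q * B) Q x, hQx0, mul_zero, ← mul_assoc x (Q * B) Q, ← mul_assoc x Q B,
      hxQ0, zero_mul, zero_mul]
  -- Q A Q = 0 for skew A
  have hkey : ∀ i j : Fin n,
      Q * ((Matrix.single i j 1 : Matrix (Fin n) (Fin n) ℂ) - Matrix.single j i 1) * Q = 0 := by
    intro i j
    apply hnsreg
    · rw [transpose_mul, transpose_mul, hQt, transpose_sub, sbm_transpose, sbm_transpose]
      noncomm_ring
    · intro a
      constructor
      · rw [mul_apply]
        exact Finset.sum_eq_zero fun k _ => by rw [(hQlast k).1, mul_zero]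
      · rw [mul_assoc, mul_apply]
        exact Finset.sum_eq_zero fun k _ => by rw [(hQlast k).2, zero_mul]
    · exact comm0 _
  have hrk : ∀ a i j b : Fin n, Q a i * Q j b = Q a j * Q i b := by
    intro a i j b
    have h := hkey i j
    rw [mul_sub, sub_mul, sub_eq_zero] at h
    have h2 := congrFun (congrFun h a) b
    rw [sbm_conj, sbm_conj] at h2
    exact h2
  have hsymQ : ∀ a b, Q a b = Q b a := by
    intro a b
    have := congrFun (congrFun hQt a) b
    rw [transpose_apply] at this
    exact this.symm
  -- conclude Q = 0
  have hQ0 : Q = 0 := by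
    by_contra hne
    obtain ⟨a0, i0, hc⟩ : ∃ a0 i0, Q a0 i0 ≠ 0 := by
      by_contra h
      push_neg at h
      exact hne (Matrix.ext fun a b => h a b)
    obtain ⟨c, hcdef⟩ : ∃ c, c = Q a0 i0 := ⟨_, rfl⟩
    rw [← hcdef] at hc
    obtain ⟨u, hu⟩ : ∃ u : Fin n → ℂ, u = fun j => Q a0 j * c⁻¹ := ⟨_, rfl⟩
    obtain ⟨v, hv⟩ : ∃ v : Fin n → ℂ, v = fun b => Q i0 b := ⟨_, rfl⟩
    have hQuv : Q = vecMulVec u v := by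
      ext j b
      rw [vecMulVec_apply, hu, hv]
      have h := hrk a0 i0 j b
      rw [← hcdef] at h
      field_simp
      linear_combination h
    have hvu : v ⬝ᵥ u = 2 := by
      have h1 : v ⬝ᵥ u = (Q * Q) i0 a0 * c⁻¹ := by
        rw [mul_apply, dotProduct, Finset.sum_mul]
        refine Finset.sum_congr rfl fun b _ => ?_
        simp only [hu, hv]
        rw [hsymQ b a0]
        ring
      rw [hQQ, Matrix.add_apply, hsymQ i0 a0, ← hcdef] at h1
      rw [h1]
      field_simp
      ring
    have hdet2 : g.det = 1 - v ⬝ᵥ u := by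
      have hgQ : g = 1 - Q := by rw [hQdef, sub_sub_cancel]
      rw [hgQ, hQuv, vecMulVec_eq Unit, det_one_sub_mul_comm, det_unique]
      simp [mul_apply, dotProduct, one_apply]
    rw [hdet, hvu] at hdet2
    norm_num at hdet2
  rw [hQdef] at hQ0
  exact (sub_eq_zero.mp hQ0).symm
end

section
/- Let g = so(n, ℂ) with n > 3 and let Φₙ : g → ℂ^{r_{n−1}} × ℂ^{rₙ} be the partial Kostant–Wallach map given by the fundamental adjoint invariants of k = so(n−1, ℂ) evaluated at x_k together with those of g evaluated at x. Then the nilfibre Φₙ^{−1}(0) contains no element x with z_k(x_k) ∩ z_g(x) = 0. That is, every x ∈ g with x and x_k both nilpotent and all invariants vanishing satisfies z_k(x_k) ∩ z_g(x) ≠ 0. -/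
open Matrix Polynomial

section stmt15aux

variable {n : ℕ}

lemma vmv_mulVec (a b z : Fin n → ℂ) : vecMulVec a b *ᵥ z = (b ⬝ᵥ z) • a := by
  ext i
  simp only [vecMulVec_apply, mulVec, dotProduct, Pi.smul_apply, smul_eq_mul]
  rw [Finset.sum_mul]
  exact Finset.sum_congr rfl fun k _ => by ring

lemma mul_vmv (M : Matrix (Fin n) (Fin n) ℂ) (a b : Fin n → ℂ) :
    M * vecMulVec a b = vecMulVec (M *ᵥ a) b := by
  ext i j
  simp [vecMulVec_apply, Matrix.mul_apply, mulVec, dotProduct, Finset.sum_mul, mul_assoc]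

lemma vmv_mul (a b : Fin n → ℂ) (M : Matrix (Fin n) (Fin n) ℂ) :
    vecMulVec a b * M = vecMulVec a (b ᵥ* M) := by
  ext i j
  simp [vecMulVec_apply, Matrix.mul_apply, vecMul, dotProduct, Finset.mul_sum, mul_assoc]

lemma vmv_mul_vmv (a b p q : Fin n → ℂ) :
    vecMulVec a b * vecMulVec p q = (b ⬝ᵥ p) • vecMulVec a q := by
  ext i j
  simp [vecMulVec_apply, Matrix.mul_apply, dotProduct, Finset.sum_mul, Finset.mul_sum]
  ring_nf
  exact Finset.sum_congr rfl fun k _ => by ring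

lemma vmv_transpose (a b : Fin n → ℂ) : (vecMulVec a b)ᵀ = vecMulVec b a := by
  ext i j; simp [vecMulVec_apply, mul_comm]

lemma vmv_smul_left (c : ℂ) (a b : Fin n → ℂ) :
    vecMulVec (c • a) b = c • vecMulVec a b := by
  ext i j; simp [vecMulVec_apply]; ring

lemma vmv_smul_right (c : ℂ) (a b : Fin n → ℂ) :
    vecMulVec a (c • b) = c • vecMulVec a b := by
  ext i j; simp [vecMulVec_apply]; ring

lemma vmv_zero_left (b : Fin n → ℂ) : vecMulVec (0 : Fin n → ℂ) b = 0 := by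
  ext i j; simp [vecMulVec_apply]

lemma vmv_zero_right (a : Fin n → ℂ) : vecMulVec a (0 : Fin n → ℂ) = 0 := by
  ext i j; simp [vecMulVec_apply]

lemma vmv_neg_right (a b : Fin n → ℂ) : vecMulVec a (-b) = -vecMulVec a b := by
  ext i j; simp [vecMulVec_apply]

lemma mulVec_sumF (u : Matrix (Fin n) (Fin n) ℂ) (s : Finset ℕ) (f : ℕ → Fin n → ℂ) :
    u *ᵥ (∑ j ∈ s, f j) = ∑ j ∈ s, u *ᵥ f j := by
  classical
  induction s using Finset.induction_on with
  | empty => simp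
  | insert _ _ h ih => simp [Finset.sum_insert h, mulVec_add, ih]

lemma dot_sumF (v : Fin n → ℂ) (s : Finset ℕ) (f : ℕ → Fin n → ℂ) :
    v ⬝ᵥ (∑ j ∈ s, f j) = ∑ j ∈ s, v ⬝ᵥ f j := by
  classical
  induction s using Finset.induction_on with
  | empty => simp
  | insert _ _ h ih => simp [Finset.sum_insert h, dotProduct_add, ih]

lemma flip_dot {u : Matrix (Fin n) (Fin n) ℂ} (hu : uᵀ = -u) (z w : Fin n → ℂ) :
    z ⬝ᵥ (u *ᵥ w) = -((u *ᵥ z) ⬝ᵥ w) := by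
  have hz : z ᵥ* u = -(u *ᵥ z) := by
    have : z ᵥ* ((uᵀ)ᵀ) = uᵀ *ᵥ z := vecMul_transpose _ _
    rw [transpose_transpose] at this
    rw [this, hu, neg_mulVec]
  rw [dotProduct_mulVec, hz, neg_dotProduct]

lemma flip_pow {u : Matrix (Fin n) (Fin n) ℂ} (hu : uᵀ = -u) (j : ℕ) (z w : Fin n → ℂ) :
    z ⬝ᵥ (u ^ j *ᵥ w) = (-1 : ℂ) ^ j * ((u ^ j *ᵥ z) ⬝ᵥ w) := by
  induction j generalizing z w with
  | zero => simp
  | succ j ih =>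
    have hl : u ^ (j+1) *ᵥ w = u ^ j *ᵥ (u *ᵥ w) := by
      rw [pow_succ, ← mulVec_mulVec]
    have hr : u *ᵥ (u ^ j *ᵥ z) = u ^ (j+1) *ᵥ z := by
      rw [mulVec_mulVec, ← pow_succ']
    rw [hl, ih, flip_dot hu (u ^ j *ᵥ z) w, hr]
    ring

lemma iso_lemma {n : ℕ} (x u : Matrix (Fin n) (Fin n) ℂ) (v e : Fin n → ℂ)
    (hxz : ∀ z, x *ᵥ z = u *ᵥ z + (e ⬝ᵥ z) • v - (v ⬝ᵥ z) • e)
    (hev : e ⬝ᵥ v = 0) (hve : v ⬝ᵥ e = 0) (hee : e ⬝ᵥ e = 1)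
    (hue : u *ᵥ e = 0) (heu : ∀ z, e ⬝ᵥ (u *ᵥ z) = 0)
    (hnilx : IsNilpotent x) (hnilu : IsNilpotent u) :
    ∀ K, v ⬝ᵥ (u ^ K *ᵥ v) = 0 := by
  intro K
  by_contra hK
  obtain ⟨M₀, hM₀⟩ := hnilu
  obtain ⟨N₀, hN₀⟩ := hnilx
  set M := M₀ + (K + 1) with hMdef
  have hM : u ^ M = 0 := by rw [hMdef, pow_add, hM₀, zero_mul]
  have hKM : K < M := by omega
  have hN : x ^ (N₀ + 1) = 0 := by rw [pow_succ, hN₀, zero_mul]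
  set a : ℕ → ℂ := fun j => v ⬝ᵥ (u ^ j *ᵥ v) with hadef
  set Q : Polynomial ℂ := 1 + ∑ j ∈ Finset.range M, Polynomial.C (a j) * Polynomial.X ^ (j + 2)
    with hQdef
  have hQc : Q.coeff (K + 2) = a K := by
    rw [hQdef, Polynomial.coeff_add, Polynomial.finset_sum_coeff]
    have h1 : (1 : Polynomial ℂ).coeff (K + 2) = 0 := by
      simp [Polynomial.coeff_one]
    rw [h1, zero_add]
    rw [Finset.sum_eq_single K]
    · simp [Polynomial.coeff_C_mul, Polynomial.coeff_X_pow]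
    · intro j _ hjK
      simp [Polynomial.coeff_C_mul, Polynomial.coeff_X_pow]
      intro h; omega
    · intro h; exact absurd (Finset.mem_range.mpr hKM) h
  have hQd : 0 < Q.degree := by
    have h1 : K + 2 ≤ Q.natDegree := Polynomial.le_natDegree_of_ne_zero (by rw [hQc]; exact hK)
    exact Polynomial.natDegree_pos_iff_degree_pos.mp (by omega)
  obtain ⟨t, ht⟩ := Complex.exists_root hQd
  have hQt : Q.eval t = 0 := ht
  have hQeval : Q.eval t = 1 + ∑ j ∈ Finset.range M, a j * t ^ (j + 2) := by
    rw [hQdef]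
    simp [Polynomial.eval_finset_sum]
  -- the vector w and y
  set w : Fin n → ℂ := ∑ j ∈ Finset.range M, (t ^ (j + 1)) • (u ^ j *ᵥ v) with hwdef
  set y : Fin n → ℂ := w + e with hydef
  have hpow0 : u ^ 0 *ᵥ v = v := by simp
  have hpowS : ∀ j, u ^ (j + 1) *ᵥ v = u *ᵥ (u ^ j *ᵥ v) := by
    intro j; rw [mulVec_mulVec, ← pow_succ']
  have heuj : ∀ j, e ⬝ᵥ (u ^ j *ᵥ v) = 0 := by
    intro j
    cases j with
    | zero => simpa using hev
    | succ j => rw [hpowS]; exact heu _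
  have hew : e ⬝ᵥ w = 0 := by
    rw [hwdef, dot_sumF]
    refine Finset.sum_eq_zero fun j _ => ?_
    rw [dotProduct_smul, heuj j, smul_zero]
  have hvw : v ⬝ᵥ w = ∑ j ∈ Finset.range M, t ^ (j + 1) * a j := by
    rw [hwdef, dot_sumF]
    exact Finset.sum_congr rfl fun j _ => by rw [dotProduct_smul]; rfl
  have huw : u *ᵥ w = ∑ j ∈ Finset.range M, (t ^ (j + 1)) • (u ^ (j + 1) *ᵥ v) := by
    rw [hwdef, mulVec_sumF]
    exact Finset.sum_congr rfl fun j _ => by rw [mulVec_smul, hpowS]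
  have hey : e ⬝ᵥ y = 1 := by rw [hydef, dotProduct_add, hew, hee, zero_add]
  have hvy : v ⬝ᵥ y = v ⬝ᵥ w := by rw [hydef, dotProduct_add, hve, add_zero]
  -- key identity
  have hyx : y - t • (x *ᵥ y) = (Q.eval t) • e := by
    rw [hxz y]
    have huy : u *ᵥ y = u *ᵥ w := by rw [hydef, mulVec_add, hue, add_zero]
    rw [huy, hey, hvy, hvw]
    -- telescoping
    have htel : w - t • (u *ᵥ w) = t • v := by
      rw [huw, hwdef, Finset.smul_sum]
      have : ∀ j ∈ Finset.range M, t • ((t ^ (j+1)) • (u ^ (j+1) *ᵥ v))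
          = (fun j => (t ^ (j+1)) • (u ^ j *ᵥ v)) (j + 1) := by
        intro j _; simp [smul_smul]; ring_nf
      rw [Finset.sum_congr rfl this, ← Finset.sum_sub_distrib,
        Finset.sum_range_sub' (fun j => (t ^ (j+1)) • (u ^ j *ᵥ v)) M]
      simp [hM, hpow0]
    have expand : y - t • (u *ᵥ w + (1:ℂ) • v - (∑ j ∈ Finset.range M, t ^ (j+1) * a j) • e)
        = (w - t • (u *ᵥ w) - t • v) + (1 + t * ∑ j ∈ Finset.range M, t ^ (j+1) * a j) • e := by
      rw [hydef]
      module
    rw [expand, htel, sub_self, zero_add, hQeval]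
    congr 1
    rw [Finset.mul_sum]
    congr 1
    exact Finset.sum_congr rfl fun j _ => by ring
  -- inverse of (1 - t x)
  set P : Matrix (Fin n) (Fin n) ℂ := ∑ j ∈ Finset.range (N₀ + 1), (t ^ j) • x ^ j with hPdef
  have hP : P * (1 - t • x) = 1 := by
    rw [hPdef, Finset.sum_mul]
    have : ∀ j ∈ Finset.range (N₀ + 1), (t ^ j • x ^ j) * (1 - t • x)
        = (fun j => t ^ j • x ^ j) j - (fun j => t ^ j • x ^ j) (j + 1) := by
      intro j _
      simp only [mul_sub, mul_one]
      congr 1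
      rw [smul_mul_assoc, Matrix.mul_smul, smul_smul, ← pow_succ, ← pow_succ]
    rw [Finset.sum_congr rfl this, Finset.sum_range_sub' (fun j => t ^ j • x ^ j) (N₀ + 1)]
    simp [hN]
  have hy2 : y = Q.eval t • (P *ᵥ e) := by
    have h1 : (1 - t • x) *ᵥ y = Q.eval t • e := by
      rw [sub_mulVec, one_mulVec, smul_mulVec, hyx]
    calc y = (1 : Matrix (Fin n) (Fin n) ℂ) *ᵥ y := (one_mulVec y).symm
    _ = (P * (1 - t • x)) *ᵥ y := by rw [hP]
    _ = P *ᵥ ((1 - t • x) *ᵥ y) := by rw [← mulVec_mulVec]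
    _ = P *ᵥ (Q.eval t • e) := by rw [h1]
    _ = Q.eval t • (P *ᵥ e) := by rw [mulVec_smul]
  have : (1 : ℂ) = 0 := by
    have h2 := hey
    rw [hy2, dotProduct_smul, hQt, zero_smul] at h2
    exact h2.symm
  exact one_ne_zero this
lemma buildZ {n : ℕ} (last : Fin n) (x u : Matrix (Fin n) (Fin n) ℂ) (v : Fin n → ℂ)
    (hu : uᵀ = -u)
    (hdec : x = u + vecMulVec v (Pi.single last 1) - vecMulVec (Pi.single last 1) v)
    (a b : Fin n → ℂ) (c : ℂ)
    (hua : u *ᵥ a = 0) (hub : u *ᵥ b = c • a)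
    (haL : a last = 0) (hbL : b last = 0)
    (hav : a ⬝ᵥ v = 0) (hbv : b ⬝ᵥ v = 0)
    (hZ : vecMulVec a b - vecMulVec b a ≠ 0) :
    ∃ Z : Matrix (Fin n) (Fin n) ℂ, Z ≠ 0 ∧ Zᵀ = -Z ∧
      (∀ i, Z i last = 0 ∧ Z last i = 0) ∧ Z * u = u * Z ∧ Z * x = x * Z := by
  set e : Fin n → ℂ := Pi.single last 1 with hedef
  set Z : Matrix (Fin n) (Fin n) ℂ := vecMulVec a b - vecMulVec b a with hZdef
  have hae : a ⬝ᵥ e = 0 := by rw [hedef, dotProduct_single, haL, zero_mul]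
  have hbe : b ⬝ᵥ e = 0 := by rw [hedef, dotProduct_single, hbL, zero_mul]
  have hea : e ⬝ᵥ a = 0 := by rw [hedef, single_dotProduct, haL, mul_zero]
  have heb : e ⬝ᵥ b = 0 := by rw [hedef, single_dotProduct, hbL, mul_zero]
  have hva : v ⬝ᵥ a = 0 := by rw [dotProduct_comm]; exact hav
  have hvb : v ⬝ᵥ b = 0 := by rw [dotProduct_comm]; exact hbv
  have hvecmul : ∀ z : Fin n → ℂ, z ᵥ* u = -(u *ᵥ z) := by
    intro z
    have h1 : z ᵥ* ((uᵀ)ᵀ) = uᵀ *ᵥ z := vecMul_transpose _ _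
    rw [transpose_transpose] at h1
    rw [h1, hu, neg_mulVec]
  have hZu : Z * u = u * Z := by
    rw [hZdef, sub_mul, mul_sub, vmv_mul, vmv_mul, mul_vmv, mul_vmv,
      hvecmul, hvecmul, hua, hub, neg_zero, vmv_zero_right, vmv_zero_left,
      vmv_neg_right, vmv_smul_right, vmv_smul_left]
    abel
  have h1 : Z * vecMulVec v e = 0 := by
    rw [hZdef, sub_mul, vmv_mul_vmv, vmv_mul_vmv, hbv, hav, zero_smul, zero_smul, sub_zero]
  have h2 : Z * vecMulVec e v = 0 := by
    rw [hZdef, sub_mul, vmv_mul_vmv, vmv_mul_vmv, hbe, hae, zero_smul, zero_smul, sub_zero]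
  have h3 : vecMulVec v e * Z = 0 := by
    rw [hZdef, mul_sub, vmv_mul_vmv, vmv_mul_vmv, hea, heb, zero_smul, zero_smul, sub_zero]
  have h4 : vecMulVec e v * Z = 0 := by
    rw [hZdef, mul_sub, vmv_mul_vmv, vmv_mul_vmv, hva, hvb, zero_smul, zero_smul, sub_zero]
  refine ⟨Z, hZ, ?_, ?_, hZu, ?_⟩
  · rw [hZdef, transpose_sub, vmv_transpose, vmv_transpose, neg_sub]
  · intro i
    constructor
    · show (vecMulVec a b - vecMulVec b a) i last = 0
      simp [vecMulVec_apply, haL, hbL]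
    · show (vecMulVec a b - vecMulVec b a) last i = 0
      simp [vecMulVec_apply, haL, hbL]
  · have lhs : Z * x = Z * u := by
      rw [hdec, mul_sub, mul_add, h1, h2, add_zero, sub_zero]
    have rhs : x * Z = u * Z := by
      rw [hdec, sub_mul, add_mul, h3, h4, add_zero, sub_zero]
    rw [lhs, rhs, hZu]

lemma stringNZ {n : ℕ} (u : Matrix (Fin n) (Fin n) ℂ) (a b : Fin n → ℂ)
    (ha : a ≠ 0) (hua : u *ᵥ a = 0) (hub : u *ᵥ b = a) :
    vecMulVec a b - vecMulVec b a ≠ 0 := by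
  intro h
  have hab : ∀ i j, a i * b j = b i * a j := by
    intro i j
    have := congrFun (congrFun h i) j
    simpa [vecMulVec_apply, sub_eq_zero] using this
  obtain ⟨p, hp⟩ := Function.ne_iff.mp ha
  have hfun : a p • b = b p • a := by
    funext j
    simpa [smul_eq_mul] using hab p j
  have h1 : a p • a = 0 := by
    calc a p • a = a p • (u *ᵥ b) := by rw [hub]
    _ = u *ᵥ (a p • b) := by rw [mulVec_smul]
    _ = u *ᵥ (b p • a) := by rw [hfun]
    _ = b p • (u *ᵥ a) := by rw [mulVec_smul]
    _ = 0 := by rw [hua, smul_zero]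
  have : a p * a p = 0 := by
    have := congrFun h1 p
    simpa [smul_eq_mul] using this
  exact hp (mul_self_eq_zero.mp this)

end stmt15aux

set_option maxHeartbeats 2000000 in
/-- For `g = so(n, ℂ)` with `n > 3`, the nilfibre of the partial Kostant–Wallach map
contains no `n`-strongly regular elements: every `x ∈ g` with `x` and its projection
`x_k` to `k = so(n-1, ℂ)` both nilpotent (i.e. all invariants vanishing) satisfies
`z_k(x_k) ∩ z_g(x) ≠ 0`. -/
theorem stmt15 (n : ℕ) (hn : 3 < n)
    (x : Matrix (Fin n) (Fin n) ℂ) (hx : xᵀ = -x)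
    (last : Fin n) (hlast : (last : ℕ) = n - 1)
    (xk : Matrix (Fin n) (Fin n) ℂ)
    (hxk : ∀ i j, xk i j = if i = last ∨ j = last then 0 else x i j)
    (hnilx : IsNilpotent x) (hnilxk : IsNilpotent xk) :
    ∃ Z : Matrix (Fin n) (Fin n) ℂ, Z ≠ 0 ∧ Zᵀ = -Z ∧
      (∀ i, Z i last = 0 ∧ Z last i = 0) ∧ Z * xk = xk * Z ∧ Z * x = x * Z := by
  classical
  set v : Fin n → ℂ := fun i => x i last with hvdef
  have hxe : ∀ i j, x j i = -x i j := by
    intro i j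
    have := congrFun (congrFun hx i) j
    simpa [transpose_apply, neg_apply] using this
  have hvL : v last = 0 := by
    have h := hxe last last
    show x last last = 0
    linear_combination h / 2
  have huT : xkᵀ = -xk := by
    ext i j
    show xk j i = -xk i j
    rw [hxk j i, hxk i j]
    by_cases hi : i = last <;> by_cases hj : j = last <;> simp [hi, hj, hxe i j]
  have hrow : ∀ j, xk last j = 0 := fun j => by rw [hxk]; simp
  have hcol : ∀ i, xk i last = 0 := fun i => by rw [hxk]; simp
  have hdec : x = xk + vecMulVec v (Pi.single last 1) - vecMulVec (Pi.single last 1) v := by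
    ext i j
    simp only [Matrix.add_apply, Matrix.sub_apply, vecMulVec_apply]
    rw [hxk i j]
    by_cases hi : i = last <;> by_cases hj : j = last
    · rw [hi, hj, if_pos (Or.inl rfl), Pi.single_eq_same]
      simp only [hvdef]
      linear_combination (hxe last last) / 2
    · rw [hi, if_pos (Or.inl rfl), Pi.single_eq_same, Pi.single_eq_of_ne hj]
      simp only [hvdef]
      linear_combination hxe j last
    · rw [hj, if_pos (Or.inr rfl), Pi.single_eq_same, Pi.single_eq_of_ne hi]
      simp only [hvdef]; ring
    · rw [if_neg (not_or.mpr ⟨hi, hj⟩), Pi.single_eq_of_ne hi, Pi.single_eq_of_ne hj]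
      simp only [hvdef]; ring
  have hue : xk *ᵥ (Pi.single last 1 : Fin n → ℂ) = 0 := by
    rw [mulVec_single]
    ext i; simp [hcol]
  have heu : ∀ z, (Pi.single last 1 : Fin n → ℂ) ⬝ᵥ (xk *ᵥ z) = 0 := by
    intro z
    rw [single_dotProduct, one_mul]
    simp [mulVec, dotProduct, hrow]
  have hee : (Pi.single last 1 : Fin n → ℂ) ⬝ᵥ (Pi.single last 1) = 1 := by
    rw [single_dotProduct, one_mul, Pi.single_eq_same]
  have hev : (Pi.single last 1 : Fin n → ℂ) ⬝ᵥ v = 0 := by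
    rw [single_dotProduct, one_mul]; exact hvL
  have hve : v ⬝ᵥ (Pi.single last 1 : Fin n → ℂ) = 0 := by
    rw [dotProduct_single, mul_one]; exact hvL
  have hxz : ∀ z, x *ᵥ z = xk *ᵥ z + ((Pi.single last 1 : Fin n → ℂ) ⬝ᵥ z) • v
      - (v ⬝ᵥ z) • (Pi.single last 1 : Fin n → ℂ) := by
    intro z
    rw [hdec, sub_mulVec, add_mulVec, vmv_mulVec, vmv_mulVec]
  have hiso : ∀ K, v ⬝ᵥ (xk ^ K *ᵥ v) = 0 :=
    iso_lemma x xk v (Pi.single last 1) hxz hev hve hee hue heu hnilx hnilxk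
  have hlastP : ∀ (z : Fin n → ℂ), z last = 0 → ∀ j, (xk ^ j *ᵥ z) last = 0 := by
    intro z hz j
    cases j with
    | zero => simpa using hz
    | succ j =>
      rw [pow_succ', ← mulVec_mulVec]
      simp [mulVec, dotProduct, hrow]
  have key : ∀ b : Fin n → ℂ, b last = 0 → (∀ j, b ⬝ᵥ (xk ^ j *ᵥ v) = 0) → xk *ᵥ b ≠ 0 →
      ∃ Z : Matrix (Fin n) (Fin n) ℂ, Z ≠ 0 ∧ Zᵀ = -Z ∧
        (∀ i, Z i last = 0 ∧ Z last i = 0) ∧ Z * xk = xk * Z ∧ Z * x = x * Z := by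
    intro b hbL hbv hxb
    obtain ⟨M₀, hM₀⟩ := hnilxk
    have hM : xk ^ (M₀ + 1) = 0 := by rw [pow_succ, hM₀, zero_mul]
    set P' : ℕ → Prop := fun j => xk ^ j *ᵥ b ≠ 0 with hPdef
    have h1M : 1 ≤ M₀ + 1 := Nat.le_add_left 1 M₀
    have hP1 : P' 1 := by simpa [hPdef, pow_one] using hxb
    have hk1 : 1 ≤ Nat.findGreatest P' (M₀ + 1) := Nat.le_findGreatest h1M hP1
    have hkP : P' (Nat.findGreatest P' (M₀ + 1)) := Nat.findGreatest_spec h1M hP1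
    have hktop : xk ^ (Nat.findGreatest P' (M₀ + 1) + 1) *ᵥ b = 0 := by
      by_cases hle : Nat.findGreatest P' (M₀ + 1) + 1 ≤ M₀ + 1
      · have h2 := Nat.findGreatest_is_greatest (lt_add_one (Nat.findGreatest P' (M₀ + 1))) hle
        have h2' : ¬(xk ^ (Nat.findGreatest P' (M₀ + 1) + 1) *ᵥ b ≠ 0) := h2
        exact not_not.mp h2'
      · have h3 : xk ^ (Nat.findGreatest P' (M₀ + 1) + 1) = 0 := by
          rw [show Nat.findGreatest P' (M₀ + 1) + 1
              = (M₀ + 1) + (Nat.findGreatest P' (M₀ + 1) + 1 - (M₀ + 1)) by omega,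
            pow_add, hM, zero_mul]
        rw [h3, zero_mulVec]
    obtain ⟨k0, hk0⟩ : ∃ k0, Nat.findGreatest P' (M₀ + 1) = k0 + 1 :=
      ⟨Nat.findGreatest P' (M₀ + 1) - 1, by omega⟩
    rw [hk0] at hkP hktop
    have hA0 : xk ^ (k0 + 1) *ᵥ b ≠ 0 := hkP
    have huA : xk *ᵥ (xk ^ (k0 + 1) *ᵥ b) = 0 := by
      rw [mulVec_mulVec, ← pow_succ']; exact hktop
    have huB : xk *ᵥ (xk ^ k0 *ᵥ b) = xk ^ (k0 + 1) *ᵥ b := by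
      rw [mulVec_mulVec, ← pow_succ']
    have hAL : (xk ^ (k0 + 1) *ᵥ b) last = 0 := hlastP b hbL (k0 + 1)
    have hBL : (xk ^ k0 *ᵥ b) last = 0 := hlastP b hbL k0
    have hdot : ∀ m : ℕ, (xk ^ m *ᵥ b) ⬝ᵥ v = 0 := by
      intro m
      have h := flip_pow huT m b v
      rw [hbv m] at h
      rcases mul_eq_zero.mp h.symm with h' | h'
      · exact absurd h' (pow_ne_zero _ (neg_ne_zero.mpr one_ne_zero))
      · exact h'
    exact buildZ last x xk v huT hdec (xk ^ (k0 + 1) *ᵥ b) (xk ^ k0 *ᵥ b) 1 huA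
      (by rw [one_smul]; exact huB) hAL hBL (hdot (k0 + 1)) (hdot k0)
      (stringNZ xk _ _ hA0 huA huB)
  by_cases hxv : xk *ᵥ v ≠ 0
  · exact key v hvL hiso hxv
  rw [not_ne_iff] at hxv
  by_cases hbex : ∃ b : Fin n → ℂ, b last = 0 ∧ b ⬝ᵥ v = 0 ∧ xk *ᵥ b ≠ 0
  · obtain ⟨b, hbL, hbv0, hxb⟩ := hbex
    refine key b hbL ?_ hxb
    intro j
    cases j with
    | zero => simpa using hbv0
    | succ j =>
      have h : xk ^ (j + 1) *ᵥ v = 0 := by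
        rw [pow_succ, ← mulVec_mulVec, hxv, mulVec_zero]
      rw [h, dotProduct_zero]
  push_neg at hbex
  by_cases hv : v = 0
  · -- x = xk and xk = 0
    have hxk0 : xk = 0 := by
      ext i j
      by_cases hj : j = last
      · rw [hj]; exact hcol i
      · have h := hbex (Pi.single j 1) (Pi.single_eq_of_ne (Ne.symm hj) 1)
          (by rw [hv, dotProduct_zero])
        have h2 := congrFun h i
        simpa [mulVec_single] using h2
    have h0 : (0:ℕ) < n := by omega
    have h1 : (1:ℕ) < n := by omega
    have h2 : (2:ℕ) < n := by omega
    set e0 : Fin n := ⟨0, h0⟩ with he0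
    set e1 : Fin n := ⟨1, h1⟩ with he1
    set e2 : Fin n := ⟨2, h2⟩ with he2
    have he01 : e0 ≠ e1 := by simp [he0, he1, Fin.ext_iff]
    have he02 : e0 ≠ e2 := by simp [he0, he2, Fin.ext_iff]
    have he12 : e1 ≠ e2 := by simp [he1, he2, Fin.ext_iff]
    set i0 : Fin n := if e0 = last then e2 else e0 with hi0
    set i1 : Fin n := if e1 = last then e2 else e1 with hi1
    have hi0l : i0 ≠ last := by
      rw [hi0]; split_ifs with h
      · intro hc; rw [← h] at hc; exact he02 hc.symm
      · exact h
    have hi1l : i1 ≠ last := by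
      rw [hi1]; split_ifs with h
      · intro hc; rw [← h] at hc; exact he12 hc.symm
      · exact h
    have hi01 : i0 ≠ i1 := by
      rw [hi0, hi1]; split_ifs with h1' h2'
      · exact absurd (h1'.trans h2'.symm) he01
      · exact (Ne.symm he12)
      · exact he02
      · exact he01
    refine buildZ last x xk v huT hdec (Pi.single i0 1) (Pi.single i1 1) 0
      (by rw [hxk0, zero_mulVec]) (by rw [hxk0, zero_mulVec, zero_smul])
      (Pi.single_eq_of_ne (Ne.symm hi0l) 1) (Pi.single_eq_of_ne (Ne.symm hi1l) 1)
      (by rw [hv, dotProduct_zero]) (by rw [hv, dotProduct_zero]) ?_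
    intro h
    have hc := congrFun (congrFun h i0) i1
    simp [vecMulVec_apply, Pi.single_eq_same, Pi.single_eq_of_ne hi01,
      Pi.single_eq_of_ne (Ne.symm hi01)] at hc
  · -- v ≠ 0, xk = 0
    obtain ⟨p, hp⟩ := Function.ne_iff.mp hv
    have hp' : v p ≠ 0 := by simpa using hp
    have hpl : p ≠ last := fun h => hp' (h ▸ hvL)
    have hskew : ∀ i j, xk j i = -xk i j := by
      intro i j
      have := congrFun (congrFun huT i) j
      simpa [transpose_apply, Matrix.neg_apply] using this
    have hxk0 : xk = 0 := by
      have hcols : ∀ i j, xk i j = xk i p / v p * v j := by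
        intro i j
        by_cases hj : j = last
        · rw [hj, hcol]
          have : v last = 0 := hvL
          rw [this, mul_zero]
        · have hb'L : ((Pi.single j 1 : Fin n → ℂ) - (v j / v p) • (Pi.single p 1 : Fin n → ℂ)) last = 0 := by
            simp [Pi.single_eq_of_ne (Ne.symm hj), Pi.single_eq_of_ne (Ne.symm hpl)]
          have hb'v : ((Pi.single j 1 : Fin n → ℂ) - (v j / v p) • (Pi.single p 1 : Fin n → ℂ)) ⬝ᵥ v = 0 := by
            rw [sub_dotProduct, smul_dotProduct, single_dotProduct, single_dotProduct, smul_eq_mul]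
            rw [one_mul, one_mul, div_mul_cancel₀ _ hp', sub_self]
          have h := hbex _ hb'L hb'v
          have h2 := congrFun h i
          have h3 : xk *ᵥ ((Pi.single j 1 : Fin n → ℂ) - (v j / v p) • (Pi.single p 1 : Fin n → ℂ))
              = xk *ᵥ (Pi.single j 1 : Fin n → ℂ) - (v j / v p) • (xk *ᵥ Pi.single p 1) := by
            rw [mulVec_sub, mulVec_smul]
          rw [h3] at h2
          simp only [Pi.sub_apply, Pi.smul_apply, smul_eq_mul, Pi.zero_apply,
            mulVec_single, Matrix.col_apply, MulOpposite.op_one, one_smul, mul_one] at h2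
          field_simp
          field_simp at h2
          linear_combination h2
      ext i j
      show xk i j = 0
      by_contra hne
      have hri : xk i p / v p ≠ 0 := fun h => hne (by rw [hcols i j, h, zero_mul])
      have hvj : v j ≠ 0 := fun h => hne (by rw [hcols i j, h, mul_zero])
      have hdiagi : xk i i = 0 := by
        have h := hskew i i
        linear_combination h / 2
      have hvi : v i = 0 := by
        have h := hcols i i
        rw [hdiagi] at h
        rcases mul_eq_zero.mp h.symm with h' | h'
        · exact absurd h' hri
        · exact h'
      have hji : xk j i = 0 := by rw [hcols j i, hvi, mul_zero]
      have := hskew i j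
      rw [hji] at this
      exact hne (by linear_combination this)
    have hvv : v ⬝ᵥ v = 0 := by
      have := hiso 0
      simpa using this
    have hq : ∃ q, q ≠ p ∧ v q ≠ 0 := by
      by_contra h; push_neg at h
      have hsum : v ⬝ᵥ v = v p * v p := by
        rw [dotProduct]
        rw [Finset.sum_eq_single p]
        · intro q _ hqp; rw [h q hqp, zero_mul]
        · intro hp''; exact absurd (Finset.mem_univ p) hp''
      rw [hvv] at hsum
      exact hp' (mul_self_eq_zero.mp hsum.symm)
    obtain ⟨q, hqp, hq0⟩ := hq
    have hql : q ≠ last := fun h => hq0 (h ▸ hvL)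
    have hr : ∃ r : Fin n, r ≠ p ∧ r ≠ q ∧ r ≠ last := by
      by_contra h; push_neg at h
      have hsub : (Finset.univ : Finset (Fin n)) ⊆ {p, q, last} := by
        intro r _
        simp only [Finset.mem_insert, Finset.mem_singleton]
        by_cases h1 : r = p
        · exact Or.inl h1
        by_cases h2 : r = q
        · exact Or.inr (Or.inl h2)
        exact Or.inr (Or.inr (h r h1 h2))
      have hcard := Finset.card_le_card hsub
      rw [Finset.card_univ, Fintype.card_fin] at hcard
      have h3 : ({p, q, last} : Finset (Fin n)).card ≤ 3 := by
        refine le_trans (Finset.card_insert_le _ _) ?_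
        have h4 := Finset.card_insert_le q ({last} : Finset (Fin n))
        simp only [Finset.card_singleton] at h4
        omega
      omega
    obtain ⟨r, hrp, hrq, hrl⟩ := hr
    have hwL : ((Pi.single r 1 : Fin n → ℂ) - (v r / v q) • (Pi.single q 1 : Fin n → ℂ)) last = 0 := by
      simp [Pi.single_eq_of_ne (Ne.symm hrl), Pi.single_eq_of_ne (Ne.symm hql)]
    have hwv : ((Pi.single r 1 : Fin n → ℂ) - (v r / v q) • (Pi.single q 1 : Fin n → ℂ)) ⬝ᵥ v = 0 := by
      rw [sub_dotProduct, smul_dotProduct, single_dotProduct, single_dotProduct, smul_eq_mul]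
      rw [one_mul, one_mul, div_mul_cancel₀ _ hq0, sub_self]
    refine buildZ last x xk v huT hdec v ((Pi.single r 1 : Fin n → ℂ) - (v r / v q) • (Pi.single q 1 : Fin n → ℂ)) 0
      (by rw [hxk0, zero_mulVec]) (by rw [hxk0, zero_mulVec, zero_smul])
      hvL hwL hvv hwv ?_
    intro h
    have hc := congrFun (congrFun h p) r
    have hwr : ((Pi.single r 1 : Fin n → ℂ) - (v r / v q) • (Pi.single q 1 : Fin n → ℂ)) r = 1 := by
      simp [Pi.single_eq_same, Pi.single_eq_of_ne hrq]
    have hwp : ((Pi.single r 1 : Fin n → ℂ) - (v r / v q) • (Pi.single q 1 : Fin n → ℂ)) p = 0 := by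
      simp [Pi.single_eq_of_ne (Ne.symm hrp), Pi.single_eq_of_ne (Ne.symm hqp)]
    rw [Matrix.sub_apply, Matrix.zero_apply, vecMulVec_apply, vecMulVec_apply, hwr, hwp] at hc
    simp at hc
    exact hp' hc
end

section
/- Let g = so(n, ℂ) with n > 3. There is no subvariety X ⊆ g such that the restriction of the Kostant–Wallach map Φ : g → ℂ^{r₂} × ⋯ × ℂ^{rₙ} to X is an isomorphism of varieties onto ℂ^{r₂} × ⋯ × ℂ^{rₙ}. -/
open Matrix

/-- The Pfaffian of a skew-symmetric matrix (sum over permutations normalized by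
`2^{m/2} (m/2)!`). -/
noncomputable def pfGen (m : ℕ) (A : Matrix (Fin m) (Fin m) ℂ) : ℂ :=
  (1 / ((2 : ℂ) ^ (m / 2) * (Nat.factorial (m / 2)))) *
    ∑ σ : Equiv.Perm (Fin m), ((Equiv.Perm.sign σ : ℤ) : ℂ) *
      ∏ i : Fin (m / 2),
        A (σ ⟨2 * (i : ℕ), by have := i.2; omega⟩) (σ ⟨2 * (i : ℕ) + 1, by have := i.2; omega⟩)

/-- The projection `x ↦ xᵢ` of `x ∈ so(n, ℂ)` onto `so(i, ℂ)` (upper-left `i × i` block). -/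
def subMat (n : ℕ) (x : Matrix (Fin n) (Fin n) ℂ) (i : ℕ) (h : i ≤ n) :
    Matrix (Fin i) (Fin i) ℂ :=
  Matrix.of fun a b => x ⟨(a : ℕ), by have := a.2; omega⟩ ⟨(b : ℕ), by have := b.2; omega⟩

/-- Index set for the Gelfand–Zeitlin functions: pairs `(i, j)` with `2 ≤ i ≤ n` and
`1 ≤ j ≤ ⌊i/2⌋` (encoded with `j` zero-based; for `i < 2` the fibre is empty). -/
def GZidx (n : ℕ) := Σ i : Fin (n + 1), Fin ((i : ℕ) / 2)

instance (n : ℕ) : Fintype (GZidx n) := by unfold GZidx; infer_instance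

/-- The Gelfand–Zeitlin function `f_{i,j}(x) = ψ_{i,j}(xᵢ)`: traces of even powers of the
projection `xᵢ`, with the last invariant replaced by the Pfaffian when `i` is even. -/
noncomputable def GZfun (n : ℕ) (p : GZidx n) (x : Matrix (Fin n) (Fin n) ℂ) : ℂ :=
  if (p.1 : ℕ) % 2 = 0 ∧ (p.2 : ℕ) + 1 = (p.1 : ℕ) / 2 then
    pfGen (p.1 : ℕ) (subMat n x (p.1 : ℕ) (by have := p.1.2; omega))
  else
    Matrix.trace ((subMat n x (p.1 : ℕ) (by have := p.1.2; omega)) ^ (2 * ((p.2 : ℕ) + 1)))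

attribute [local instance] Matrix.normedAddCommGroup Matrix.normedSpace

def pp0 : Equiv.Perm (Fin 4) := (1 : Equiv.Perm (Fin 4))
def pp1 : Equiv.Perm (Fin 4) := (Equiv.swap (2:Fin 4) 3)
def pp2 : Equiv.Perm (Fin 4) := (Equiv.swap (1:Fin 4) 2)
def pp3 : Equiv.Perm (Fin 4) := (Equiv.swap (1:Fin 4) 2 * Equiv.swap (2:Fin 4) 3)
def pp4 : Equiv.Perm (Fin 4) := (Equiv.swap (1:Fin 4) 3 * Equiv.swap (3:Fin 4) 2)
def pp5 : Equiv.Perm (Fin 4) := (Equiv.swap (1:Fin 4) 3)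
def pp6 : Equiv.Perm (Fin 4) := (Equiv.swap (0:Fin 4) 1)
def pp7 : Equiv.Perm (Fin 4) := (Equiv.swap (0:Fin 4) 1 * Equiv.swap (2:Fin 4) 3)
def pp8 : Equiv.Perm (Fin 4) := (Equiv.swap (0:Fin 4) 1 * Equiv.swap (1:Fin 4) 2)
def pp9 : Equiv.Perm (Fin 4) := (Equiv.swap (0:Fin 4) 1 * Equiv.swap (1:Fin 4) 2 * Equiv.swap (2:Fin 4) 3)
def pp10 : Equiv.Perm (Fin 4) := (Equiv.swap (0:Fin 4) 1 * Equiv.swap (1:Fin 4) 3 * Equiv.swap (3:Fin 4) 2)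
def pp11 : Equiv.Perm (Fin 4) := (Equiv.swap (0:Fin 4) 1 * Equiv.swap (1:Fin 4) 3)
def pp12 : Equiv.Perm (Fin 4) := (Equiv.swap (0:Fin 4) 2 * Equiv.swap (2:Fin 4) 1)
def pp13 : Equiv.Perm (Fin 4) := (Equiv.swap (0:Fin 4) 2 * Equiv.swap (2:Fin 4) 3 * Equiv.swap (3:Fin 4) 1)
def pp14 : Equiv.Perm (Fin 4) := (Equiv.swap (0:Fin 4) 2)
def pp15 : Equiv.Perm (Fin 4) := (Equiv.swap (0:Fin 4) 2 * Equiv.swap (2:Fin 4) 3)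
def pp16 : Equiv.Perm (Fin 4) := (Equiv.swap (0:Fin 4) 2 * Equiv.swap (1:Fin 4) 3)
def pp17 : Equiv.Perm (Fin 4) := (Equiv.swap (0:Fin 4) 2 * Equiv.swap (2:Fin 4) 1 * Equiv.swap (1:Fin 4) 3)
def pp18 : Equiv.Perm (Fin 4) := (Equiv.swap (0:Fin 4) 3 * Equiv.swap (3:Fin 4) 2 * Equiv.swap (2:Fin 4) 1)
def pp19 : Equiv.Perm (Fin 4) := (Equiv.swap (0:Fin 4) 3 * Equiv.swap (3:Fin 4) 1)
def pp20 : Equiv.Perm (Fin 4) := (Equiv.swap (0:Fin 4) 3 * Equiv.swap (3:Fin 4) 2)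
def pp21 : Equiv.Perm (Fin 4) := (Equiv.swap (0:Fin 4) 3)
def pp22 : Equiv.Perm (Fin 4) := (Equiv.swap (0:Fin 4) 3 * Equiv.swap (3:Fin 4) 1 * Equiv.swap (1:Fin 4) 2)
def pp23 : Equiv.Perm (Fin 4) := (Equiv.swap (0:Fin 4) 3 * Equiv.swap (1:Fin 4) 2)

lemma perm4_univ : (Finset.univ : Finset (Equiv.Perm (Fin 4))) = {pp0, pp1, pp2, pp3, pp4, pp5, pp6, pp7, pp8, pp9, pp10, pp11, pp12, pp13, pp14, pp15, pp16, pp17, pp18, pp19, pp20, pp21, pp22, pp23} := by decide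

lemma sum_perm4 {M : Type*} [AddCommMonoid M] (G : Equiv.Perm (Fin 4) → M) :
    (∑ σ : Equiv.Perm (Fin 4), G σ) = G pp0 + G pp1 + G pp2 + G pp3 + G pp4 + G pp5 + G pp6 + G pp7 + G pp8 + G pp9 + G pp10 + G pp11 + G pp12 + G pp13 + G pp14 + G pp15 + G pp16 + G pp17 + G pp18 + G pp19 + G pp20 + G pp21 + G pp22 + G pp23 := by
  rw [perm4_univ]
  simp (config := { decide := true }) only [Finset.sum_insert, Finset.mem_insert, Finset.sum_singleton, Finset.mem_singleton]
  abel

@[simp] lemma pp0_sign : ((Equiv.Perm.sign pp0 : ℤ) : ℂ) = 1 := by norm_num [show Equiv.Perm.sign pp0 = 1 from by decide]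
@[simp] lemma pp0_a0 : pp0 (0:Fin 4) = 0 := by decide
@[simp] lemma pp0_a1 : pp0 (1:Fin 4) = 1 := by decide
@[simp] lemma pp0_a2 : pp0 (2:Fin 4) = 2 := by decide
@[simp] lemma pp0_a3 : pp0 (3:Fin 4) = 3 := by decide
@[simp] lemma pp1_sign : ((Equiv.Perm.sign pp1 : ℤ) : ℂ) = -1 := by norm_num [show Equiv.Perm.sign pp1 = -1 from by decide]
@[simp] lemma pp1_a0 : pp1 (0:Fin 4) = 0 := by decide
@[simp] lemma pp1_a1 : pp1 (1:Fin 4) = 1 := by decide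
@[simp] lemma pp1_a2 : pp1 (2:Fin 4) = 3 := by decide
@[simp] lemma pp1_a3 : pp1 (3:Fin 4) = 2 := by decide
@[simp] lemma pp2_sign : ((Equiv.Perm.sign pp2 : ℤ) : ℂ) = -1 := by norm_num [show Equiv.Perm.sign pp2 = -1 from by decide]
@[simp] lemma pp2_a0 : pp2 (0:Fin 4) = 0 := by decide
@[simp] lemma pp2_a1 : pp2 (1:Fin 4) = 2 := by decide
@[simp] lemma pp2_a2 : pp2 (2:Fin 4) = 1 := by decide
@[simp] lemma pp2_a3 : pp2 (3:Fin 4) = 3 := by decide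
@[simp] lemma pp3_sign : ((Equiv.Perm.sign pp3 : ℤ) : ℂ) = 1 := by norm_num [show Equiv.Perm.sign pp3 = 1 from by decide]
@[simp] lemma pp3_a0 : pp3 (0:Fin 4) = 0 := by decide
@[simp] lemma pp3_a1 : pp3 (1:Fin 4) = 2 := by decide
@[simp] lemma pp3_a2 : pp3 (2:Fin 4) = 3 := by decide
@[simp] lemma pp3_a3 : pp3 (3:Fin 4) = 1 := by decide
@[simp] lemma pp4_sign : ((Equiv.Perm.sign pp4 : ℤ) : ℂ) = 1 := by norm_num [show Equiv.Perm.sign pp4 = 1 from by decide]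
@[simp] lemma pp4_a0 : pp4 (0:Fin 4) = 0 := by decide
@[simp] lemma pp4_a1 : pp4 (1:Fin 4) = 3 := by decide
@[simp] lemma pp4_a2 : pp4 (2:Fin 4) = 1 := by decide
@[simp] lemma pp4_a3 : pp4 (3:Fin 4) = 2 := by decide
@[simp] lemma pp5_sign : ((Equiv.Perm.sign pp5 : ℤ) : ℂ) = -1 := by norm_num [show Equiv.Perm.sign pp5 = -1 from by decide]
@[simp] lemma pp5_a0 : pp5 (0:Fin 4) = 0 := by decide
@[simp] lemma pp5_a1 : pp5 (1:Fin 4) = 3 := by decide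
@[simp] lemma pp5_a2 : pp5 (2:Fin 4) = 2 := by decide
@[simp] lemma pp5_a3 : pp5 (3:Fin 4) = 1 := by decide
@[simp] lemma pp6_sign : ((Equiv.Perm.sign pp6 : ℤ) : ℂ) = -1 := by norm_num [show Equiv.Perm.sign pp6 = -1 from by decide]
@[simp] lemma pp6_a0 : pp6 (0:Fin 4) = 1 := by decide
@[simp] lemma pp6_a1 : pp6 (1:Fin 4) = 0 := by decide
@[simp] lemma pp6_a2 : pp6 (2:Fin 4) = 2 := by decide
@[simp] lemma pp6_a3 : pp6 (3:Fin 4) = 3 := by decide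
@[simp] lemma pp7_sign : ((Equiv.Perm.sign pp7 : ℤ) : ℂ) = 1 := by norm_num [show Equiv.Perm.sign pp7 = 1 from by decide]
@[simp] lemma pp7_a0 : pp7 (0:Fin 4) = 1 := by decide
@[simp] lemma pp7_a1 : pp7 (1:Fin 4) = 0 := by decide
@[simp] lemma pp7_a2 : pp7 (2:Fin 4) = 3 := by decide
@[simp] lemma pp7_a3 : pp7 (3:Fin 4) = 2 := by decide
@[simp] lemma pp8_sign : ((Equiv.Perm.sign pp8 : ℤ) : ℂ) = 1 := by norm_num [show Equiv.Perm.sign pp8 = 1 from by decide]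
@[simp] lemma pp8_a0 : pp8 (0:Fin 4) = 1 := by decide
@[simp] lemma pp8_a1 : pp8 (1:Fin 4) = 2 := by decide
@[simp] lemma pp8_a2 : pp8 (2:Fin 4) = 0 := by decide
@[simp] lemma pp8_a3 : pp8 (3:Fin 4) = 3 := by decide
@[simp] lemma pp9_sign : ((Equiv.Perm.sign pp9 : ℤ) : ℂ) = -1 := by norm_num [show Equiv.Perm.sign pp9 = -1 from by decide]
@[simp] lemma pp9_a0 : pp9 (0:Fin 4) = 1 := by decide
@[simp] lemma pp9_a1 : pp9 (1:Fin 4) = 2 := by decide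
@[simp] lemma pp9_a2 : pp9 (2:Fin 4) = 3 := by decide
@[simp] lemma pp9_a3 : pp9 (3:Fin 4) = 0 := by decide
@[simp] lemma pp10_sign : ((Equiv.Perm.sign pp10 : ℤ) : ℂ) = -1 := by norm_num [show Equiv.Perm.sign pp10 = -1 from by decide]
@[simp] lemma pp10_a0 : pp10 (0:Fin 4) = 1 := by decide
@[simp] lemma pp10_a1 : pp10 (1:Fin 4) = 3 := by decide
@[simp] lemma pp10_a2 : pp10 (2:Fin 4) = 0 := by decide
@[simp] lemma pp10_a3 : pp10 (3:Fin 4) = 2 := by decide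
@[simp] lemma pp11_sign : ((Equiv.Perm.sign pp11 : ℤ) : ℂ) = 1 := by norm_num [show Equiv.Perm.sign pp11 = 1 from by decide]
@[simp] lemma pp11_a0 : pp11 (0:Fin 4) = 1 := by decide
@[simp] lemma pp11_a1 : pp11 (1:Fin 4) = 3 := by decide
@[simp] lemma pp11_a2 : pp11 (2:Fin 4) = 2 := by decide
@[simp] lemma pp11_a3 : pp11 (3:Fin 4) = 0 := by decide
@[simp] lemma pp12_sign : ((Equiv.Perm.sign pp12 : ℤ) : ℂ) = 1 := by norm_num [show Equiv.Perm.sign pp12 = 1 from by decide]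
@[simp] lemma pp12_a0 : pp12 (0:Fin 4) = 2 := by decide
@[simp] lemma pp12_a1 : pp12 (1:Fin 4) = 0 := by decide
@[simp] lemma pp12_a2 : pp12 (2:Fin 4) = 1 := by decide
@[simp] lemma pp12_a3 : pp12 (3:Fin 4) = 3 := by decide
@[simp] lemma pp13_sign : ((Equiv.Perm.sign pp13 : ℤ) : ℂ) = -1 := by norm_num [show Equiv.Perm.sign pp13 = -1 from by decide]
@[simp] lemma pp13_a0 : pp13 (0:Fin 4) = 2 := by decide
@[simp] lemma pp13_a1 : pp13 (1:Fin 4) = 0 := by decide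
@[simp] lemma pp13_a2 : pp13 (2:Fin 4) = 3 := by decide
@[simp] lemma pp13_a3 : pp13 (3:Fin 4) = 1 := by decide
@[simp] lemma pp14_sign : ((Equiv.Perm.sign pp14 : ℤ) : ℂ) = -1 := by norm_num [show Equiv.Perm.sign pp14 = -1 from by decide]
@[simp] lemma pp14_a0 : pp14 (0:Fin 4) = 2 := by decide
@[simp] lemma pp14_a1 : pp14 (1:Fin 4) = 1 := by decide
@[simp] lemma pp14_a2 : pp14 (2:Fin 4) = 0 := by decide
@[simp] lemma pp14_a3 : pp14 (3:Fin 4) = 3 := by decide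
@[simp] lemma pp15_sign : ((Equiv.Perm.sign pp15 : ℤ) : ℂ) = 1 := by norm_num [show Equiv.Perm.sign pp15 = 1 from by decide]
@[simp] lemma pp15_a0 : pp15 (0:Fin 4) = 2 := by decide
@[simp] lemma pp15_a1 : pp15 (1:Fin 4) = 1 := by decide
@[simp] lemma pp15_a2 : pp15 (2:Fin 4) = 3 := by decide
@[simp] lemma pp15_a3 : pp15 (3:Fin 4) = 0 := by decide
@[simp] lemma pp16_sign : ((Equiv.Perm.sign pp16 : ℤ) : ℂ) = 1 := by norm_num [show Equiv.Perm.sign pp16 = 1 from by decide]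
@[simp] lemma pp16_a0 : pp16 (0:Fin 4) = 2 := by decide
@[simp] lemma pp16_a1 : pp16 (1:Fin 4) = 3 := by decide
@[simp] lemma pp16_a2 : pp16 (2:Fin 4) = 0 := by decide
@[simp] lemma pp16_a3 : pp16 (3:Fin 4) = 1 := by decide
@[simp] lemma pp17_sign : ((Equiv.Perm.sign pp17 : ℤ) : ℂ) = -1 := by norm_num [show Equiv.Perm.sign pp17 = -1 from by decide]
@[simp] lemma pp17_a0 : pp17 (0:Fin 4) = 2 := by decide
@[simp] lemma pp17_a1 : pp17 (1:Fin 4) = 3 := by decide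
@[simp] lemma pp17_a2 : pp17 (2:Fin 4) = 1 := by decide
@[simp] lemma pp17_a3 : pp17 (3:Fin 4) = 0 := by decide
@[simp] lemma pp18_sign : ((Equiv.Perm.sign pp18 : ℤ) : ℂ) = -1 := by norm_num [show Equiv.Perm.sign pp18 = -1 from by decide]
@[simp] lemma pp18_a0 : pp18 (0:Fin 4) = 3 := by decide
@[simp] lemma pp18_a1 : pp18 (1:Fin 4) = 0 := by decide
@[simp] lemma pp18_a2 : pp18 (2:Fin 4) = 1 := by decide
@[simp] lemma pp18_a3 : pp18 (3:Fin 4) = 2 := by decide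
@[simp] lemma pp19_sign : ((Equiv.Perm.sign pp19 : ℤ) : ℂ) = 1 := by norm_num [show Equiv.Perm.sign pp19 = 1 from by decide]
@[simp] lemma pp19_a0 : pp19 (0:Fin 4) = 3 := by decide
@[simp] lemma pp19_a1 : pp19 (1:Fin 4) = 0 := by decide
@[simp] lemma pp19_a2 : pp19 (2:Fin 4) = 2 := by decide
@[simp] lemma pp19_a3 : pp19 (3:Fin 4) = 1 := by decide
@[simp] lemma pp20_sign : ((Equiv.Perm.sign pp20 : ℤ) : ℂ) = 1 := by norm_num [show Equiv.Perm.sign pp20 = 1 from by decide]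
@[simp] lemma pp20_a0 : pp20 (0:Fin 4) = 3 := by decide
@[simp] lemma pp20_a1 : pp20 (1:Fin 4) = 1 := by decide
@[simp] lemma pp20_a2 : pp20 (2:Fin 4) = 0 := by decide
@[simp] lemma pp20_a3 : pp20 (3:Fin 4) = 2 := by decide
@[simp] lemma pp21_sign : ((Equiv.Perm.sign pp21 : ℤ) : ℂ) = -1 := by norm_num [show Equiv.Perm.sign pp21 = -1 from by decide]
@[simp] lemma pp21_a0 : pp21 (0:Fin 4) = 3 := by decide
@[simp] lemma pp21_a1 : pp21 (1:Fin 4) = 1 := by decide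
@[simp] lemma pp21_a2 : pp21 (2:Fin 4) = 2 := by decide
@[simp] lemma pp21_a3 : pp21 (3:Fin 4) = 0 := by decide
@[simp] lemma pp22_sign : ((Equiv.Perm.sign pp22 : ℤ) : ℂ) = -1 := by norm_num [show Equiv.Perm.sign pp22 = -1 from by decide]
@[simp] lemma pp22_a0 : pp22 (0:Fin 4) = 3 := by decide
@[simp] lemma pp22_a1 : pp22 (1:Fin 4) = 2 := by decide
@[simp] lemma pp22_a2 : pp22 (2:Fin 4) = 0 := by decide
@[simp] lemma pp22_a3 : pp22 (3:Fin 4) = 1 := by decide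
@[simp] lemma pp23_sign : ((Equiv.Perm.sign pp23 : ℤ) : ℂ) = 1 := by norm_num [show Equiv.Perm.sign pp23 = 1 from by decide]
@[simp] lemma pp23_a0 : pp23 (0:Fin 4) = 3 := by decide
@[simp] lemma pp23_a1 : pp23 (1:Fin 4) = 2 := by decide
@[simp] lemma pp23_a2 : pp23 (2:Fin 4) = 1 := by decide
@[simp] lemma pp23_a3 : pp23 (3:Fin 4) = 0 := by decide

-- index embeddings
def e4 (n : ℕ) (hn : 4 ≤ n) (k : Fin 4) : Fin n := Fin.castLE hn k

lemma pfGen4_eq (A : Matrix (Fin 4) (Fin 4) ℂ) :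
    pfGen 4 A = (1/8) * ∑ σ : Equiv.Perm (Fin 4), ((Equiv.Perm.sign σ : ℤ) : ℂ) *
      (A (σ 0) (σ 1) * A (σ 2) (σ 3)) := by
  unfold pfGen
  norm_num [Nat.factorial]
  apply Finset.sum_congr rfl
  intro σ _
  rw [Fin.prod_univ_two]
  rfl

lemma pfGen2_eq (A : Matrix (Fin 2) (Fin 2) ℂ) :
    pfGen 2 A = (1/2) * (A 0 1 - A 1 0) := by
  unfold pfGen
  rw [show (Finset.univ : Finset (Equiv.Perm (Fin 2))) = {Equiv.refl _, Equiv.swap 0 1} from by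
    decide]
  rw [Finset.sum_insert (by decide), Finset.sum_singleton]
  rw [show Equiv.Perm.sign (Equiv.refl (Fin 2)) = 1 from by decide,
      show Equiv.Perm.sign (Equiv.swap (0:Fin 2) 1) = -1 from by decide]
  rw [Fin.prod_univ_one, Fin.prod_univ_one]
  norm_num
  ring

lemma trace_mul_eq {m : ℕ} (A B : Matrix (Fin m) (Fin m) ℂ) :
    Matrix.trace (A * B) = ∑ k : Fin m, ∑ l : Fin m, A k l * B l k := by
  simp [Matrix.trace, Matrix.diag, Matrix.mul_apply]

noncomputable def tr3B (n : ℕ) (hn : 4 ≤ n) :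
    Matrix (Fin n) (Fin n) ℂ →ₗ[ℂ] Matrix (Fin n) (Fin n) ℂ →ₗ[ℂ] ℂ :=
  LinearMap.mk₂ ℂ
    (fun x y => ∑ k : Fin 3, ∑ l : Fin 3,
      x (Fin.castLE (by omega) k) (Fin.castLE (by omega) l) *
      y (Fin.castLE (by omega) l) (Fin.castLE (by omega) k))
    (fun x x' y => by simp [Matrix.add_apply, add_mul, Finset.sum_add_distrib])
    (fun c x y => by simp [Matrix.smul_apply, smul_eq_mul, Finset.mul_sum, mul_assoc])
    (fun x y y' => by simp [Matrix.add_apply, mul_add, Finset.sum_add_distrib])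
    (fun c x y => by
      simp only [Matrix.smul_apply, smul_eq_mul, Finset.mul_sum]
      exact Finset.sum_congr rfl fun k _ => Finset.sum_congr rfl fun l _ => by ring)

noncomputable def tr4B (n : ℕ) (hn : 4 ≤ n) :
    Matrix (Fin n) (Fin n) ℂ →ₗ[ℂ] Matrix (Fin n) (Fin n) ℂ →ₗ[ℂ] ℂ :=
  LinearMap.mk₂ ℂ
    (fun x y => ∑ k : Fin 4, ∑ l : Fin 4,
      x (e4 n hn k) (e4 n hn l) * y (e4 n hn l) (e4 n hn k))
    (fun x x' y => by simp [Matrix.add_apply, add_mul, Finset.sum_add_distrib])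
    (fun c x y => by simp [Matrix.smul_apply, smul_eq_mul, Finset.mul_sum, mul_assoc])
    (fun x y y' => by simp [Matrix.add_apply, mul_add, Finset.sum_add_distrib])
    (fun c x y => by
      simp only [Matrix.smul_apply, smul_eq_mul, Finset.mul_sum]
      exact Finset.sum_congr rfl fun k _ => Finset.sum_congr rfl fun l _ => by ring)

noncomputable def pfB (n : ℕ) (hn : 4 ≤ n) :
    Matrix (Fin n) (Fin n) ℂ →ₗ[ℂ] Matrix (Fin n) (Fin n) ℂ →ₗ[ℂ] ℂ :=
  LinearMap.mk₂ ℂ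
    (fun x y => (1/8 : ℂ) * (x (e4 n hn 0) (e4 n hn 1) * y (e4 n hn 2) (e4 n hn 3) - x (e4 n hn 0) (e4 n hn 1) * y (e4 n hn 3) (e4 n hn 2) - x (e4 n hn 0) (e4 n hn 2) * y (e4 n hn 1) (e4 n hn 3) + x (e4 n hn 0) (e4 n hn 2) * y (e4 n hn 3) (e4 n hn 1) + x (e4 n hn 0) (e4 n hn 3) * y (e4 n hn 1) (e4 n hn 2) - x (e4 n hn 0) (e4 n hn 3) * y (e4 n hn 2) (e4 n hn 1) - x (e4 n hn 1) (e4 n hn 0) * y (e4 n hn 2) (e4 n hn 3) + x (e4 n hn 1) (e4 n hn 0) * y (e4 n hn 3) (e4 n hn 2) + x (e4 n hn 1) (e4 n hn 2) * y (e4 n hn 0) (e4 n hn 3) - x (e4 n hn 1) (e4 n hn 2) * y (e4 n hn 3) (e4 n hn 0) - x (e4 n hn 1) (e4 n hn 3) * y (e4 n hn 0) (e4 n hn 2) + x (e4 n hn 1) (e4 n hn 3) * y (e4 n hn 2) (e4 n hn 0) + x (e4 n hn 2) (e4 n hn 0) * y (e4 n hn 1) (e4 n hn 3) - x (e4 n hn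 2) (e4 n hn 0) * y (e4 n hn 3) (e4 n hn 1) - x (e4 n hn 2) (e4 n hn 1) * y (e4 n hn 0) (e4 n hn 3) + x (e4 n hn 2) (e4 n hn 1) * y (e4 n hn 3) (e4 n hn 0) + x (e4 n hn 2) (e4 n hn 3) * y (e4 n hn 0) (e4 n hn 1) - x (e4 n hn 2) (e4 n hn 3) * y (e4 n hn 1) (e4 n hn 0) - x (e4 n hn 3) (e4 n hn 0) * y (e4 n hn 1) (e4 n hn 2) + x (e4 n hn 3) (e4 n hn 0) * y (e4 n hn 2) (e4 n hn 1) + x (e4 n hn 3) (e4 n hn 1) * y (e4 n hn 0) (e4 n hn 2) - x (e4 n hn 3) (e4 n hn 1) * y (e4 n hn 2) (e4 n hn 0) - x (e4 n hn 3) (e4 n hn 2) * y (e4 n hn 0) (e4 n hn 1) + x (e4 n hn 3) (e4 n hn 2) * y (e4 n hn 1) (e4 n hn 0)))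
    (fun x x' y => by simp only [Matrix.add_apply]; ring)
    (fun c x y => by simp only [Matrix.smul_apply, smul_eq_mul]; ring)
    (fun x y y' => by simp only [Matrix.add_apply]; ring)
    (fun c x y => by simp only [Matrix.smul_apply, smul_eq_mul]; ring)

def idx (n : ℕ) (i : ℕ) (hi : i < n + 1) (j : ℕ) (hj : j < i / 2) : GZidx n :=
  ⟨⟨i, hi⟩, ⟨j, hj⟩⟩

lemma GZ2_eq (n : ℕ) (hn : 4 ≤ n) (hi : 2 < n + 1) (hj : 0 < 2 / 2) (x : Matrix (Fin n) (Fin n) ℂ) :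
    GZfun n (idx n 2 hi 0 hj) x =
      (1/2) * (x (e4 n hn 0) (e4 n hn 1) - x (e4 n hn 1) (e4 n hn 0)) := by
  show (if ((2:ℕ) % 2 = 0 ∧ (0:ℕ) + 1 = 2 / 2) then pfGen 2 (subMat n x 2 (by omega))
    else Matrix.trace ((subMat n x 2 (by omega)) ^ (2 * (0 + 1)))) = _
  rw [if_pos (by norm_num)]
  rw [pfGen2_eq]
  rfl

lemma GZ3_eq (n : ℕ) (hn : 4 ≤ n) (hi : 3 < n + 1) (hj : 0 < 3 / 2) (x : Matrix (Fin n) (Fin n) ℂ) :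
    GZfun n (idx n 3 hi 0 hj) x = tr3B n hn x x := by
  show (if ((3:ℕ) % 2 = 0 ∧ (0:ℕ) + 1 = 3 / 2) then pfGen 3 (subMat n x 3 (by omega))
    else Matrix.trace ((subMat n x 3 (by omega)) ^ (2 * (0 + 1)))) = _
  rw [if_neg (by norm_num)]
  rw [show 2 * (0 + 1) = 2 from rfl]; refine (congrArg Matrix.trace (pow_two _)).trans ((trace_mul_eq _ _).trans ?_)
  rfl

lemma GZ4_eq (n : ℕ) (hn : 4 ≤ n) (hi : 4 < n + 1) (hj : 0 < 4 / 2) (x : Matrix (Fin n) (Fin n) ℂ) :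
    GZfun n (idx n 4 hi 0 hj) x = tr4B n hn x x := by
  show (if ((4:ℕ) % 2 = 0 ∧ (0:ℕ) + 1 = 4 / 2) then pfGen 4 (subMat n x 4 (by omega))
    else Matrix.trace ((subMat n x 4 (by omega)) ^ (2 * (0 + 1)))) = _
  rw [if_neg (by norm_num)]
  rw [show 2 * (0 + 1) = 2 from rfl]; refine (congrArg Matrix.trace (pow_two _)).trans ((trace_mul_eq _ _).trans ?_)
  rfl

lemma GZ5_eq (n : ℕ) (hn : 4 ≤ n) (hi : 4 < n + 1) (hj : 1 < 4 / 2) (x : Matrix (Fin n) (Fin n) ℂ) :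
    GZfun n (idx n 4 hi 1 hj) x = pfB n hn x x := by
  show (if ((4:ℕ) % 2 = 0 ∧ (1:ℕ) + 1 = 4 / 2) then pfGen 4 (subMat n x 4 (by omega))
    else Matrix.trace ((subMat n x 4 (by omega)) ^ (2 * (1 + 1)))) = _
  rw [if_pos (by norm_num)]
  rw [pfGen4_eq, sum_perm4]
  have hS : ∀ a b : Fin 4, subMat n x 4 (by omega : (4:ℕ) ≤ n) a b = x (e4 n hn a) (e4 n hn b) :=
    fun _ _ => rfl
  simp only [pp0_sign, pp0_a0, pp0_a1, pp0_a2, pp0_a3, pp1_sign, pp1_a0, pp1_a1, pp1_a2, pp1_a3, pp2_sign, pp2_a0, pp2_a1, pp2_a2, pp2_a3, pp3_sign, pp3_a0, pp3_a1, pp3_a2, pp3_a3, pp4_sign, pp4_a0, pp4_a1, pp4_a2, pp4_a3, pp5_sign, pp5_a0, pp5_a1, pp5_a2, pp5_a3, pp6_sign, pp6_a0, pp6_a1, pp6_a2, pp6_a3, pp7_sign, pp7_a0, pp7_a1, pp7_a2, pp7_a3, pp8_sign, pp8_a0, pp8_a1, pp8_a2, pp8_a3, pp9_sign, pp9_a0,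 pp9_a1, pp9_a2, pp9_a3, pp10_sign, pp10_a0, pp10_a1, pp10_a2, pp10_a3, pp11_sign, pp11_a0, pp11_a1, pp11_a2, pp11_a3, pp12_sign, pp12_a0, pp12_a1, pp12_a2, pp12_a3, pp13_sign, pp13_a0, pp13_a1, pp13_a2, pp13_a3, pp14_sign, pp14_a0, pp14_a1, pp14_a2, pp14_a3, pp15_sign, pp15_a0, pp15_a1, pp15_a2, pp15_a3, pp16_sign, pp16_a0, pp16_a1, pp16_a2, pp16_a3, pp17_sign, pp17_a0, pp17_a1, pp17_a2, pp17_a3, pp18_sign, pp18_a0, pp18_a1, pp18_a2, pp18_a3, pp19_sign, pp19_a0, pp19_a1, pp19_a2, pp19_a3, pp20_sign, pp20_a0, pp20_a1, pp20_a2, pp20_a3, pp21_sign, pp21_a0, pp21_a1, pp21_a2, pp21_a3, pp22_sign, pp22_a0, pp22_a1, pp22_a2, pp22_a3, pp23_sign, pp23_a0, pp23_a1, pp23_a2, pp23_a3]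
  simp only [hS, pfB, LinearMap.mk₂_apply]
  ring

section Deriv

variable {E : Type*} [NormedAddCommGroup E] [NormedSpace ℂ E] [FiniteDimensional ℂ E]

noncomputable def bilCLM (B : E →ₗ[ℂ] E →ₗ[ℂ] ℂ) : E →L[ℂ] E →L[ℂ] ℂ :=
  LinearMap.toContinuousLinearMap
    { toFun := fun x => LinearMap.toContinuousLinearMap (B x)
      map_add' := fun x y => by ext z; simp
      map_smul' := fun c x => by ext z; simp }

@[simp] lemma bilCLM_apply (B : E →ₗ[ℂ] E →ₗ[ℂ] ℂ) (x y : E) : bilCLM B x y = B x y := by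
  simp [bilCLM]

lemma quad_hasFDerivAt (B : E →ₗ[ℂ] E →ₗ[ℂ] ℂ) (x₀ : E) :
    HasFDerivAt (fun y => B y y)
      ((bilCLM B).precompR E x₀ (ContinuousLinearMap.id ℂ E) +
       (bilCLM B).precompL E (ContinuousLinearMap.id ℂ E) x₀) x₀ := by
  have h := (bilCLM B).hasFDerivAt_of_bilinear (hasFDerivAt_id x₀) (hasFDerivAt_id x₀)
  have heq : (fun y : E => B y y) = fun y : E => (bilCLM B) (id y) (id y) := by
    funext y; simp
  rw [heq]
  exact h

end Deriv

lemma section_bilinear_eq (n : ℕ) (f : (GZidx n → ℂ) → Matrix (Fin n) (Fin n) ℂ)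
    (hdiff : Differentiable ℂ f) (q : GZidx n)
    (B : Matrix (Fin n) (Fin n) ℂ →ₗ[ℂ] Matrix (Fin n) (Fin n) ℂ →ₗ[ℂ] ℂ)
    (hB : ∀ y, GZfun n q y = B y y)
    (hsec : ∀ c, (fun p => GZfun n p (f c)) = c)
    (v : GZidx n → ℂ) :
    B (f 0) (fderiv ℂ f 0 v) + B (fderiv ℂ f 0 v) (f 0) = v q := by
  have hf0 : HasFDerivAt f (fderiv ℂ f 0) 0 := (hdiff 0).hasFDerivAt
  have hq := quad_hasFDerivAt B (f 0)
  have hGZ : GZfun n q = fun y => B y y := funext hB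
  rw [← hGZ] at hq
  have hcomp := hq.comp 0 hf0
  have hfun : (GZfun n q ∘ f) = fun c => c q := funext fun c => congrFun (hsec c) q
  rw [hfun] at hcomp
  have hproj := ContinuousLinearMap.hasFDerivAt
    (f := ContinuousLinearMap.proj (R := ℂ) (φ := fun _ : GZidx n => ℂ) q)
    (x := (0 : GZidx n → ℂ))
  have huniq := hcomp.unique hproj
  have happ := congrArg (fun (L : (GZidx n → ℂ) →L[ℂ] ℂ) => L v) huniq
  exact happ

lemma br0 (n : ℕ) (hn : 4 ≤ n) : ∀ (h : 3 ≤ n), Fin.castLE h (0 : Fin 3) = e4 n hn 0 :=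
  fun _ => rfl
lemma br1 (n : ℕ) (hn : 4 ≤ n) : ∀ (h : 3 ≤ n), Fin.castLE h (1 : Fin 3) = e4 n hn 1 :=
  fun _ => rfl
lemma br2 (n : ℕ) (hn : 4 ≤ n) : ∀ (h : 3 ≤ n), Fin.castLE h (2 : Fin 3) = e4 n hn 2 :=
  fun _ => rfl

lemma tr3B_expand (n : ℕ) (hn : 4 ≤ n) (x y : Matrix (Fin n) (Fin n) ℂ) :
    tr3B n hn x y = x (e4 n hn 0) (e4 n hn 0) * y (e4 n hn 0) (e4 n hn 0) +
      x (e4 n hn 0) (e4 n hn 1) * y (e4 n hn 1) (e4 n hn 0) +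
      x (e4 n hn 0) (e4 n hn 2) * y (e4 n hn 2) (e4 n hn 0) +
      x (e4 n hn 1) (e4 n hn 0) * y (e4 n hn 0) (e4 n hn 1) +
      x (e4 n hn 1) (e4 n hn 1) * y (e4 n hn 1) (e4 n hn 1) +
      x (e4 n hn 1) (e4 n hn 2) * y (e4 n hn 2) (e4 n hn 1) +
      x (e4 n hn 2) (e4 n hn 0) * y (e4 n hn 0) (e4 n hn 2) +
      x (e4 n hn 2) (e4 n hn 1) * y (e4 n hn 1) (e4 n hn 2) +
      x (e4 n hn 2) (e4 n hn 2) * y (e4 n hn 2) (e4 n hn 2) := by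
  simp only [tr3B, LinearMap.mk₂_apply, Fin.sum_univ_three, br0 n hn, br1 n hn, br2 n hn]
  ring

lemma tr4B_expand (n : ℕ) (hn : 4 ≤ n) (x y : Matrix (Fin n) (Fin n) ℂ) :
    tr4B n hn x y = x (e4 n hn 0) (e4 n hn 0) * y (e4 n hn 0) (e4 n hn 0) +
      x (e4 n hn 0) (e4 n hn 1) * y (e4 n hn 1) (e4 n hn 0) +
      x (e4 n hn 0) (e4 n hn 2) * y (e4 n hn 2) (e4 n hn 0) +
      x (e4 n hn 0) (e4 n hn 3) * y (e4 n hn 3) (e4 n hn 0) +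
      x (e4 n hn 1) (e4 n hn 0) * y (e4 n hn 0) (e4 n hn 1) +
      x (e4 n hn 1) (e4 n hn 1) * y (e4 n hn 1) (e4 n hn 1) +
      x (e4 n hn 1) (e4 n hn 2) * y (e4 n hn 2) (e4 n hn 1) +
      x (e4 n hn 1) (e4 n hn 3) * y (e4 n hn 3) (e4 n hn 1) +
      x (e4 n hn 2) (e4 n hn 0) * y (e4 n hn 0) (e4 n hn 2) +
      x (e4 n hn 2) (e4 n hn 1) * y (e4 n hn 1) (e4 n hn 2) +
      x (e4 n hn 2) (e4 n hn 2) * y (e4 n hn 2) (e4 n hn 2) +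
      x (e4 n hn 2) (e4 n hn 3) * y (e4 n hn 3) (e4 n hn 2) +
      x (e4 n hn 3) (e4 n hn 0) * y (e4 n hn 0) (e4 n hn 3) +
      x (e4 n hn 3) (e4 n hn 1) * y (e4 n hn 1) (e4 n hn 3) +
      x (e4 n hn 3) (e4 n hn 2) * y (e4 n hn 2) (e4 n hn 3) +
      x (e4 n hn 3) (e4 n hn 3) * y (e4 n hn 3) (e4 n hn 3) := by
  simp only [tr4B, LinearMap.mk₂_apply, Fin.sum_univ_four]
  ring

def skewT (n : ℕ) : Matrix (Fin n) (Fin n) ℂ →ₗ[ℂ] Matrix (Fin n) (Fin n) ℂ where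
  toFun := fun y => yᵀ + y
  map_add' := fun y z => by
    simp only [Matrix.transpose_add]
    abel
  map_smul' := fun cc y => by
    simp only [Matrix.transpose_smul, RingHom.id_apply, smul_add]

theorem stmt19' (n : ℕ) (hn : 3 < n) :
    ¬ ∃ (X : Set (Matrix (Fin n) (Fin n) ℂ))
        (f : (GZidx n → ℂ) → Matrix (Fin n) (Fin n) ℂ),
      X ⊆ {x : Matrix (Fin n) (Fin n) ℂ | xᵀ = -x} ∧
      Differentiable ℂ f ∧
      (∀ x ∈ X, f (fun p => GZfun n p x) = x) ∧
      (∀ c : GZidx n → ℂ, f c ∈ X ∧ (fun p => GZfun n p (f c)) = c) := by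
  classical
  rintro ⟨X, f, hXskew, hdiff, -, hsec⟩
  have hn4 : 4 ≤ n := hn
  have hi2 : 2 < n + 1 := by omega
  have hj2 : 0 < 2 / 2 := by norm_num
  have hi3 : 3 < n + 1 := by omega
  have hj3 : 0 < 3 / 2 := by norm_num
  have hi4 : 4 < n + 1 := by omega
  have hj4 : 0 < 4 / 2 := by norm_num
  have hj5 : 1 < 4 / 2 := by norm_num
  have hsk : (f 0)ᵀ = -(f 0) := hXskew (hsec 0).1
  have hsx : ∀ i j : Fin n, f 0 j i = - f 0 i j := by
    intro i j
    have h := congrFun (congrFun hsk i) j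
    simpa [Matrix.transpose_apply, Matrix.neg_apply] using h
  have hdg : ∀ i : Fin n, f 0 i i = 0 := fun i => by
    have h := hsx i i
    linear_combination h / 2
  have hΦ : (fun p => GZfun n p (f 0)) = (0 : GZidx n → ℂ) := (hsec 0).2
  have h2v : GZfun n (idx n 2 hi2 0 hj2) (f 0) = 0 := by
    simpa using congrFun hΦ (idx n 2 hi2 0 hj2)
  have h3v : GZfun n (idx n 3 hi3 0 hj3) (f 0) = 0 := by
    simpa using congrFun hΦ (idx n 3 hi3 0 hj3)
  have h4v : GZfun n (idx n 4 hi4 0 hj4) (f 0) = 0 := by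
    simpa using congrFun hΦ (idx n 4 hi4 0 hj4)
  have h5v : GZfun n (idx n 4 hi4 1 hj5) (f 0) = 0 := by
    simpa using congrFun hΦ (idx n 4 hi4 1 hj5)
  rw [GZ2_eq n hn4] at h2v
  rw [GZ3_eq n hn4, tr3B_expand] at h3v
  rw [GZ4_eq n hn4, tr4B_expand] at h4v
  rw [GZ5_eq n hn4] at h5v
  simp only [pfB, LinearMap.mk₂_apply] at h5v
  have hs10 := hsx (e4 n hn4 0) (e4 n hn4 1)
  have hs20 := hsx (e4 n hn4 0) (e4 n hn4 2)
  have hs21 := hsx (e4 n hn4 1) (e4 n hn4 2)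
  have hs30 := hsx (e4 n hn4 0) (e4 n hn4 3)
  have hs31 := hsx (e4 n hn4 1) (e4 n hn4 3)
  have hs32 := hsx (e4 n hn4 2) (e4 n hn4 3)
  have hd0 := hdg (e4 n hn4 0)
  have hd1 := hdg (e4 n hn4 1)
  have hd2 := hdg (e4 n hn4 2)
  have hd3 := hdg (e4 n hn4 3)
  have h01 : f 0 (e4 n hn4 0) (e4 n hn4 1) = 0 := by linear_combination h2v + hs10 / 2
  simp only [hs10, hs20, hs21, hs30, hs31, hs32, hd0, hd1, hd2, hd3, h01] at h3v h4v h5v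
  have hA : (f 0 (e4 n hn4 0) (e4 n hn4 2)) ^ 2 + (f 0 (e4 n hn4 1) (e4 n hn4 2)) ^ 2 = 0 := by linear_combination (-1/2 : ℂ) * h3v
  have hB : (f 0 (e4 n hn4 0) (e4 n hn4 3)) ^ 2 + (f 0 (e4 n hn4 1) (e4 n hn4 3)) ^ 2 + (f 0 (e4 n hn4 2) (e4 n hn4 3)) ^ 2 = 0 := by
    linear_combination (-1/2 : ℂ) * h4v + (1/2 : ℂ) * h3v
  have hC : (f 0 (e4 n hn4 0) (e4 n hn4 3)) * (f 0 (e4 n hn4 1) (e4 n hn4 2)) - (f 0 (e4 n hn4 0) (e4 n hn4 2)) * (f 0 (e4 n hn4 1) (e4 n hn4 3)) = 0 := by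
    linear_combination h5v
  have hsq : ((f 0 (e4 n hn4 0) (e4 n hn4 2)) * (f 0 (e4 n hn4 2) (e4 n hn4 3))) ^ 2 = 0 := by
    linear_combination ((f 0 (e4 n hn4 0) (e4 n hn4 2)) ^ 2) * hB - ((f 0 (e4 n hn4 0) (e4 n hn4 3)) ^ 2) * hA +
      ((f 0 (e4 n hn4 0) (e4 n hn4 2)) * (f 0 (e4 n hn4 1) (e4 n hn4 3)) + (f 0 (e4 n hn4 0) (e4 n hn4 3)) * (f 0 (e4 n hn4 1) (e4 n hn4 2))) * hC
  have hae : (f 0 (e4 n hn4 0) (e4 n hn4 2)) * (f 0 (e4 n hn4 2) (e4 n hn4 3)) = 0 := (pow_eq_zero_iff two_ne_zero).mp hsq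
  have E3 := fun v => section_bilinear_eq n f hdiff (idx n 3 hi3 0 hj3) (tr3B n hn4)
    (fun y => GZ3_eq n hn4 hi3 hj3 y) (fun c => (hsec c).2) v
  have E4 := fun v => section_bilinear_eq n f hdiff (idx n 4 hi4 0 hj4) (tr4B n hn4)
    (fun y => GZ4_eq n hn4 hi4 hj4 y) (fun c => (hsec c).2) v
  have E5 := fun v => section_bilinear_eq n f hdiff (idx n 4 hi4 1 hj5) (pfB n hn4)
    (fun y => GZ5_eq n hn4 hi4 hj5 y) (fun c => (hsec c).2) v
  have hTD : ∀ v : GZidx n → ℂ, (fderiv ℂ f 0 v)ᵀ + fderiv ℂ f 0 v = 0 := by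
    have hTf : (⇑(LinearMap.toContinuousLinearMap (skewT n)) ∘ f) =
        fun _ => (0 : Matrix (Fin n) (Fin n) ℂ) := by
      funext cc
      have hxc : (f cc)ᵀ = -(f cc) := hXskew (hsec cc).1
      show (f cc)ᵀ + f cc = 0
      rw [hxc]
      exact neg_add_cancel _
    have hT := ((LinearMap.toContinuousLinearMap (skewT n)).hasFDerivAt
      (x := f 0)).comp 0 ((hdiff 0).hasFDerivAt)
    rw [hTf] at hT
    have h0 := hT.unique (hasFDerivAt_const 0 0)
    intro v
    have h1 := congrArg
      (fun (L : (GZidx n → ℂ) →L[ℂ] Matrix (Fin n) (Fin n) ℂ) => L v) h0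
    show (fderiv ℂ f 0 v)ᵀ + fderiv ℂ f 0 v = 0
    exact h1
  have hDsk : ∀ (v : GZidx n → ℂ) (i j : Fin n),
      fderiv ℂ f 0 v j i = - fderiv ℂ f 0 v i j := by
    intro v i j
    have h2 := congrFun (congrFun (hTD v) j) i
    simp only [Matrix.add_apply, Matrix.transpose_apply, Matrix.zero_apply] at h2
    linear_combination h2
  have hDdg : ∀ (v : GZidx n → ℂ) (i : Fin n), fderiv ℂ f 0 v i i = 0 := by
    intro v i
    have h := hDsk v i i
    linear_combination h / 2
  by_cases ha : (f 0 (e4 n hn4 0) (e4 n hn4 2)) = 0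
  · have hb : (f 0 (e4 n hn4 1) (e4 n hn4 2)) = 0 := by
      have hbsq : (f 0 (e4 n hn4 1) (e4 n hn4 2)) ^ 2 = 0 := by linear_combination hA - (f 0 (e4 n hn4 0) (e4 n hn4 2)) * ha
      exact (pow_eq_zero_iff two_ne_zero).mp hbsq
    set v : GZidx n → ℂ := fun q => if q = idx n 3 hi3 0 hj3 then 1 else 0 with hv
    have hE := E3 v
    rw [tr3B_expand, tr3B_expand] at hE
    have hv3 : v (idx n 3 hi3 0 hj3) = 1 := if_pos rfl
    rw [hv3] at hE
    simp only [hs10, hs20, hs21, hd0, hd1, hd2, h01, ha, hb] at hE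
    have : (0 : ℂ) = 1 := by linear_combination hE
    norm_num at this
  · have hb2 : (f 0 (e4 n hn4 1) (e4 n hn4 2)) ≠ 0 := by
      intro hb
      apply ha
      have hasq : (f 0 (e4 n hn4 0) (e4 n hn4 2)) ^ 2 = 0 := by linear_combination hA - (f 0 (e4 n hn4 1) (e4 n hn4 2)) * hb
      exact (pow_eq_zero_iff two_ne_zero).mp hasq
    set v : GZidx n → ℂ := fun q => if q = idx n 4 hi4 0 hj4 then 1 else 0 with hv
    have hne3 : idx n 3 hi3 0 hj3 ≠ idx n 4 hi4 0 hj4 := by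
      intro h
      have h1 := congrArg (fun q : GZidx n => (q.1 : ℕ)) h
      simp [idx] at h1
    have hne5 : idx n 4 hi4 1 hj5 ≠ idx n 4 hi4 0 hj4 := by
      intro h
      have h2 := eq_of_heq (Sigma.mk.inj_iff.mp h).2
      have h3 := congrArg Fin.val h2
      simp at h3
    have hE3 := E3 v
    have hE4 := E4 v
    have hE5 := E5 v
    rw [tr3B_expand, tr3B_expand] at hE3
    rw [tr4B_expand, tr4B_expand] at hE4
    simp only [pfB, LinearMap.mk₂_apply] at hE5
    have hv3 : v (idx n 3 hi3 0 hj3) = 0 := if_neg hne3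
    have hv4 : v (idx n 4 hi4 0 hj4) = 1 := if_pos rfl
    have hv5 : v (idx n 4 hi4 1 hj5) = 0 := if_neg hne5
    rw [hv3] at hE3
    rw [hv4] at hE4
    rw [hv5] at hE5
    have hk10 := hDsk v (e4 n hn4 0) (e4 n hn4 1)
    have hk20 := hDsk v (e4 n hn4 0) (e4 n hn4 2)
    have hk21 := hDsk v (e4 n hn4 1) (e4 n hn4 2)
    have hk30 := hDsk v (e4 n hn4 0) (e4 n hn4 3)
    have hk31 := hDsk v (e4 n hn4 1) (e4 n hn4 3)
    have hk32 := hDsk v (e4 n hn4 2) (e4 n hn4 3)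
    have hkd0 := hDdg v (e4 n hn4 0)
    have hkd1 := hDdg v (e4 n hn4 1)
    have hkd2 := hDdg v (e4 n hn4 2)
    have hkd3 := hDdg v (e4 n hn4 3)
    simp only [hs10, hs20, hs21, hs30, hs31, hs32, hd0, hd1, hd2, hd3, h01,
      hk10, hk20, hk21, hk30, hk31, hk32, hkd0, hkd1, hkd2, hkd3] at hE3 hE4 hE5
    have hab : (f 0 (e4 n hn4 0) (e4 n hn4 2)) * (f 0 (e4 n hn4 1) (e4 n hn4 2)) = 0 := by
      linear_combination (f 0 (e4 n hn4 0) (e4 n hn4 2) * f 0 (e4 n hn4 1) (e4 n hn4 2) + f 0 (e4 n hn4 0) (e4 n hn4 3) * f 0 (e4 n hn4 1) (e4 n hn4 3)) * hE3 - (f 0 (e4 n hn4 0) (e4 n hn4 2) * f 0 (e4 n hn4 1) (e4 n hn4 2)) * hE4 - (4 * f 0 (e4 n hn4 0) (e4 n hn4 2) * f 0 (e4 n hn4 0) (e4 n hn4 3)) * hE5 + (4 * (f 0 (e4 n hn4 0) (e4 n hn4 3)) * (fderiv ℂ f 0 v (e4 n hn4 0) (e4 n hn4 1))) * hae + (fderiv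 ℂ f 0 v (e4 n hn4 1) (e4 n hn4 2)) * ((4 * (f 0 (e4 n hn4 0) (e4 n hn4 2))) * hB + (4 * (f 0 (e4 n hn4 1) (e4 n hn4 3))) * hC - (4 * (f 0 (e4 n hn4 2) (e4 n hn4 3))) * hae) + (fderiv ℂ f 0 v (e4 n hn4 1) (e4 n hn4 3)) * ((-4 * (f 0 (e4 n hn4 0) (e4 n hn4 3))) * hA + (4 * (f 0 (e4 n hn4 1) (e4 n hn4 2))) * hC) - (4 * (f 0 (e4 n hn4 1) (e4 n hn4 2)) * (fderiv ℂ f 0 v (e4 n hn4 2) (e4 n hn4 3))) * hae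
    rcases mul_eq_zero.mp hab with h | h
    · exact ha h
    · exact hb2 h

/-- For `g = so(n, ℂ)` with `n > 3`, there is no subvariety `X ⊆ g` such that the
Kostant–Wallach map `Φ` (whose coordinates are the Gelfand–Zeitlin functions) restricts
to an isomorphism of `X` onto `ℂ^{r₂} × ⋯ × ℂ^{rₙ}`: there is no subset `X` of `g`
together with a differentiable (regular) inverse `f` with `Φ ∘ f = id` and
`f ∘ Φ|_X = id`. -/
theorem stmt19 (n : ℕ) (hn : 3 < n) :
    ¬ ∃ (X : Set (Matrix (Fin n) (Fin n) ℂ))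
        (f : (GZidx n → ℂ) → Matrix (Fin n) (Fin n) ℂ),
      X ⊆ {x : Matrix (Fin n) (Fin n) ℂ | xᵀ = -x} ∧
      Differentiable ℂ f ∧
      (∀ x ∈ X, f (fun p => GZfun n p x) = x) ∧
      (∀ c : GZidx n → ℂ, f c ∈ X ∧ (fun p => GZfun n p (f c)) = c) := stmt19' n hn
end
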